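/- arXiv:2204.08964 — 7 statements merged into one kernel-verified Lean document; each statement's English description precedes it below -/
import Mathlib

section
/- Let U be a unitary on ℂ^d ⊗ ℂ^k, χ ∈ ℂ^k a unit vector, and suppose the associated transition operator T(ρ) = Tr_u(U(ρ⊗|χ⟩⟨χ|)U*) has a full-rank stationary state ρ_ss = Σ_i λ_i |f_i⟩⟨f_i| (spectral decomposition). Then there exists a unitary V on ℂ^d ⊗ ℂ^k (the absorber space tensor the noise unit) such that, writing W = (1⊗V)(U⊗1) as operators on ℂ^d ⊗ ℂ^d ⊗ ℂ^k (system ⊗ absorber ⊗ noise unit, with appropriate ampliations) and |ψ̃⟩ = Σ_i √λ_i |f_i⟩⊗|f_i⟩ ∈ ℂ^d ⊗ ℂ^d, one has W(|ψ̃⟩⊗|χ⟩) = |ψ̃⟩⊗|χ⟩. Consequently, for every n, applying the n-step dynamics W^(n)···W^(1) (where W^(j) acts on system+absorber and the j-th of n noise units) to |ψ̃⟩⊗|χ⟩^⊗n leaves this vector invariant, so the n-step output state equals the input state |χ⟩^⊗n. -/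
open scoped BigOperators Matrix Kronecker ComplexConjugate Classical
open Matrix

noncomputable section

/-- Inner product on `ι → ℂ`, conjugate-linear in the first argument. -/
def inn {ι : Type*} [Fintype ι] (v w : ι → ℂ) : ℂ := ∑ i, conj (v i) * w i

/-- Squared norm on `ι → ℂ`. -/
def nsq {ι : Type*} [Fintype ι] (v : ι → ℂ) : ℝ := ∑ i, Complex.normSq (v i)

/-- Tensor product of two vectors. -/
def vtens {α β : Type*} (v : α → ℂ) (w : β → ℂ) : α × β → ℂ := fun p => v p.1 * w p.2

/-- `n`-fold tensor power of a vector. -/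
def vpow {ι : Type*} (n : ℕ) (χ : ι → ℂ) : (Fin n → ι) → ℂ := fun g => ∏ j, χ (g j)

/-- Outer product `|v⟩⟨w|`. -/
def outer {α : Type*} (v w : α → ℂ) : Matrix α α ℂ := fun x y => v x * conj (w y)

/-- Ampliation of an operator on system ⊗ (single noise unit) to system ⊗ (n noise units),
acting on the `j`-th noise unit. -/
def amp {α ι : Type*} [DecidableEq ι] (n : ℕ) (W : Matrix (α × ι) (α × ι) ℂ) (j : Fin n) :
    Matrix (α × (Fin n → ι)) (α × (Fin n → ι)) ℂ :=
  fun p q => if ∀ l, l ≠ j → p.2 l = q.2 l then W (p.1, p.2 j) (q.1, q.2 j) else 0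

/-- The `n`-step unitary `W⁽ⁿ⁾ ⋯ W⁽²⁾ W⁽¹⁾`. -/
def steps {α ι : Type*} [Fintype α] [Fintype ι] [DecidableEq α] [DecidableEq ι]
    (n : ℕ) (W : Matrix (α × ι) (α × ι) ℂ) :
    Matrix (α × (Fin n → ι)) (α × (Fin n → ι)) ℂ :=
  ((List.ofFn fun j : Fin n => amp n W j).reverse).prod

/-- Partial trace over the noise unit. -/
def ptraceNoise {α ι : Type*} [Fintype ι] (A : Matrix (α × ι) (α × ι) ℂ) : Matrix α α ℂ :=
  fun s t => ∑ u, A (s, u) (t, u)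

/-- Transition operator `T(ρ) = Tr_u (U (ρ ⊗ |χ⟩⟨χ|) U*)`. -/
def tmap {α ι : Type*} [Fintype α] [Fintype ι] (U : Matrix (α × ι) (α × ι) ℂ) (χ : ι → ℂ)
    (ρ : Matrix α α ℂ) : Matrix α α ℂ :=
  ptraceNoise (U * (ρ ⊗ₖ outer χ χ) * Uᴴ)

/-- Ampliation `U ⊗ 1` of the system-noise unitary `U`, acting trivially on the absorber
(second `Fin d` factor): indices are `((system, absorber), noise)`. -/
def ampSys {d k : ℕ} (U : Matrix (Fin d × Fin k) (Fin d × Fin k) ℂ) :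
    Matrix ((Fin d × Fin d) × Fin k) ((Fin d × Fin d) × Fin k) ℂ :=
  fun p q => if p.1.2 = q.1.2 then U (p.1.1, p.2) (q.1.1, q.2) else 0

/-- Ampliation `1 ⊗ V` of the absorber-noise unitary `V`, acting trivially on the system
(first `Fin d` factor). -/
def ampAbs {d k : ℕ} (V : Matrix (Fin d × Fin k) (Fin d × Fin k) ℂ) :
    Matrix ((Fin d × Fin d) × Fin k) ((Fin d × Fin d) × Fin k) ℂ :=
  fun p q => if p.1.1 = q.1.1 then V (p.1.2, p.2) (q.1.2, q.2) else 0

lemma prod_fix {β : Type*} [Fintype β] [DecidableEq β] (L : List (Matrix β β ℂ)) (v : β → ℂ)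
    (h : ∀ A ∈ L, A.mulVec v = v) : L.prod.mulVec v = v := by
  induction L with
  | nil => simp [Matrix.one_mulVec]
  | cons A L ih =>
      rw [List.prod_cons, ← Matrix.mulVec_mulVec, ih (fun B hB => h B (List.mem_cons_of_mem _ hB)),
        h A List.mem_cons_self]

lemma sum_update {ι : Type*} [Fintype ι] [DecidableEq ι] {n : ℕ} (j : Fin n) (g : Fin n → ι)
    (F : (Fin n → ι) → ℂ) :
    ∑ h : Fin n → ι, (if ∀ l, l ≠ j → g l = h l then F h else 0)
      = ∑ y : ι, F (Function.update g j y) := by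
  have key : ∀ h : Fin n → ι, ∀ y : ι,
      (h = Function.update g j y) ↔ (y = h j ∧ ∀ l, l ≠ j → g l = h l) := by
    intro h y
    constructor
    · rintro rfl
      refine ⟨(Function.update_self j y g).symm, fun l hl => (Function.update_of_ne hl y g).symm⟩
    · rintro ⟨rfl, hP⟩
      funext l
      by_cases hl : l = j
      · subst hl; simp
      · rw [Function.update_of_ne hl, (hP l hl)]
  calc ∑ h : Fin n → ι, (if ∀ l, l ≠ j → g l = h l then F h else 0)
      = ∑ h : Fin n → ι, ∑ y : ι, (if h = Function.update g j y then F h else 0) := by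
        refine Finset.sum_congr rfl fun h _ => ?_
        simp only [key h, ite_and]
        rw [Finset.sum_ite_eq' (Finset.univ) (h j) (fun _ => if (∀ l, l ≠ j → g l = h l) then F h else 0)]
        simp
    _ = ∑ y : ι, ∑ h : Fin n → ι, (if h = Function.update g j y then F h else 0) :=
        Finset.sum_comm
    _ = ∑ y : ι, F (Function.update g j y) := by
        refine Finset.sum_congr rfl fun y _ => ?_
        rw [Finset.sum_ite_eq' Finset.univ (Function.update g j y) F]
        simp

lemma amp_fix {α ι : Type*} [Fintype α] [Fintype ι] [DecidableEq ι] (n : ℕ)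
    (W : Matrix (α × ι) (α × ι) ℂ) (ψ : α → ℂ) (χ : ι → ℂ)
    (hW : W.mulVec (vtens ψ χ) = vtens ψ χ) (j : Fin n) :
    (amp n W j).mulVec (vtens ψ (vpow n χ)) = vtens ψ (vpow n χ) := by
  funext p
  obtain ⟨a, g⟩ := p
  have hW' := congrFun hW (a, g j)
  simp only [Matrix.mulVec, dotProduct, vtens, Fintype.sum_prod_type] at hW' ⊢
  calc ∑ b, ∑ h : Fin n → ι, amp n W j (a, g) (b, h) * (ψ b * vpow n χ h)
      = ∑ b, ∑ y : ι, W (a, g j) (b, y) * (ψ b * vpow n χ (Function.update g j y)) := by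
        refine Finset.sum_congr rfl fun b _ => ?_
        have step := sum_update j g (fun h => W (a, g j) (b, h j) * (ψ b * vpow n χ h))
        simp only [Function.update_self] at step
        rw [← step]
        refine Finset.sum_congr rfl fun h _ => ?_
        simp only [amp, ite_mul, zero_mul]
    _ = ∑ b, ∑ y : ι, (W (a, g j) (b, y) * (ψ b * χ y)) * ∏ l ∈ Finset.univ \ {j}, χ (g l) := by
        refine Finset.sum_congr rfl fun b _ => Finset.sum_congr rfl fun y _ => ?_
        have : vpow n χ (Function.update g j y) = χ y * ∏ l ∈ Finset.univ \ {j}, χ (g l) := by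
          unfold vpow
          have h1 : ∀ l, χ (Function.update g j y l)
              = Function.update (fun l => χ (g l)) j (χ y) l := by
            intro l
            by_cases hl : l = j
            · subst hl; simp
            · rw [Function.update_of_ne hl, Function.update_of_ne hl]
          rw [Finset.prod_congr rfl fun l _ => h1 l, Finset.prod_update_of_mem (Finset.mem_univ j)]
        rw [this]; ring
    _ = (∑ b, ∑ y : ι, W (a, g j) (b, y) * (ψ b * χ y)) * ∏ l ∈ Finset.univ \ {j}, χ (g l) := by
        rw [Finset.sum_mul]
        exact Finset.sum_congr rfl fun b _ => (Finset.sum_mul _ _ _).symm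
    _ = (ψ a * χ (g j)) * ∏ l ∈ Finset.univ \ {j}, χ (g l) := by rw [hW']
    _ = ψ a * vpow n χ g := by
        unfold vpow
        rw [Finset.prod_eq_mul_prod_sdiff_singleton_of_mem (Finset.mem_univ j)]
        ring

/-- coherent quantum absorber, discrete time.
If the transition operator of a discrete quantum Markov chain with unitary `U` and input
state `χ` has a full-rank stationary state `ρ_ss = ∑ i, λ i |f i⟩⟨f i|`, then there is a
unitary `V` on absorber ⊗ noise such that `W = (1⊗V)(U⊗1)` fixes `ψ̃ ⊗ χ`, where
`ψ̃ = ∑ i, √(λ i) |f i⟩ ⊗ |f i⟩`; consequently for every `n` the `n`-step dynamics leaves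
`ψ̃ ⊗ χ^⊗n` invariant, so the output state equals the input state `χ^⊗n`. -/
theorem absorber_exists
    (d k : ℕ)
    (U : Matrix (Fin d × Fin k) (Fin d × Fin k) ℂ)
    (hU : U ∈ Matrix.unitaryGroup (Fin d × Fin k) ℂ)
    (χ : Fin k → ℂ) (hχ : nsq χ = 1)
    (lam : Fin d → ℝ) (f : Fin d → Fin d → ℂ)
    (hf : ∀ i i', inn (f i) (f i') = if i = i' then 1 else 0)
    (hlam_pos : ∀ i, 0 < lam i)
    (hlam_sum : ∑ i, lam i = 1)
    (ρss : Matrix (Fin d) (Fin d) ℂ)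
    (hρss : ρss = fun s t => ∑ i, (lam i : ℂ) * f i s * conj (f i t))
    (hstat : tmap U χ ρss = ρss)
    (ψt : Fin d × Fin d → ℂ)
    (hψt : ψt = fun p => ∑ i, (Real.sqrt (lam i) : ℂ) * f i p.1 * f i p.2) :
    ∃ V ∈ Matrix.unitaryGroup (Fin d × Fin k) ℂ,
      (ampAbs V * ampSys U).mulVec (vtens ψt χ) = vtens ψt χ ∧
      ∀ n : ℕ,
        (steps n (ampAbs V * ampSys U)).mulVec (vtens ψt (vpow n χ))
          = vtens ψt (vpow n χ) := by
  -- basic facts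
  have hk : k ≠ 0 := by
    rintro rfl
    simp [nsq] at hχ
  have hinnχ : inn χ χ = 1 := by
    have : inn χ χ = ((nsq χ : ℝ) : ℂ) := by
      simp only [inn, nsq]
      push_cast
      exact Finset.sum_congr rfl fun i _ => by
        rw [Complex.normSq_eq_conj_mul_self]
    rw [this, hχ]; norm_num
  -- completeness of f
  have hfc : ∀ s t : Fin d, (∑ i, f i s * conj (f i t)) = if s = t then 1 else 0 := by
    intro s t
    have h1 : (Matrix.of fun s i => f i s)ᴴ * (Matrix.of fun s i => f i s) = 1 := by
      ext i j
      simp only [Matrix.mul_apply, Matrix.conjTranspose_apply, Matrix.of_apply,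
        Matrix.one_apply]
      exact hf i j
    have h2 := mul_eq_one_comm.mp h1
    have := congrFun (congrFun h2 s) t
    simpa [Matrix.mul_apply, Matrix.conjTranspose_apply, Matrix.one_apply] using this
  set Φ : Fin d → (Fin d × Fin k) → ℂ :=
    fun s p => ∑ q : Fin d × Fin k, U (s, p.2) q * ψt (q.1, p.1) * χ q.2 with hΦdef
  have hfo' : ∀ i j : Fin d, (∑ a, f i a * conj (f j a)) = if j = i then 1 else 0 := by
    intro i j
    rw [← hf j i]
    exact Finset.sum_congr rfl fun a _ => by ring
  have hsq : ∀ i, ((Real.sqrt (lam i) : ℂ)) * ((Real.sqrt (lam i) : ℂ)) = (lam i : ℂ) := by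
    intro i
    rw [← Complex.ofReal_mul, Real.mul_self_sqrt (hlam_pos i).le]
  have hpsi : ∀ x y : Fin d, (∑ a, ψt (x, a) * conj (ψt (y, a))) = ρss x y := by
    intro x y
    rw [hψt, hρss]
    calc ∑ a, (∑ i, (Real.sqrt (lam i) : ℂ) * f i x * f i a) *
          conj (∑ j, (Real.sqrt (lam j) : ℂ) * f j y * f j a)
        = ∑ a, ∑ i, ∑ j, ((Real.sqrt (lam i) : ℂ) * f i x * f i a) *
            (conj ((Real.sqrt (lam j) : ℂ)) * conj (f j y) * conj (f j a)) := by
          refine Finset.sum_congr rfl fun a _ => ?_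
          rw [map_sum, Finset.sum_mul_sum]
          exact Finset.sum_congr rfl fun i _ => Finset.sum_congr rfl fun j _ => by
            simp only [_root_.map_mul]
      _ = ∑ i, ∑ j, ((Real.sqrt (lam i) : ℂ) * f i x) *
            (conj ((Real.sqrt (lam j) : ℂ)) * conj (f j y)) * ∑ a, f i a * conj (f j a) := by
          rw [Finset.sum_comm]
          refine Finset.sum_congr rfl fun i _ => ?_
          rw [Finset.sum_comm]
          refine Finset.sum_congr rfl fun j _ => ?_
          rw [Finset.mul_sum]
          exact Finset.sum_congr rfl fun a _ => by ring
      _ = ∑ i, (lam i : ℂ) * f i x * conj (f i y) := by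
          refine Finset.sum_congr rfl fun i _ => ?_
          simp only [Complex.conj_ofReal, hfo', mul_ite, mul_one, mul_zero,
            Finset.sum_ite_eq', Finset.mem_univ, if_true]
          calc (Real.sqrt (lam i) : ℂ) * f i x * ((Real.sqrt (lam i) : ℂ) * conj (f i y))
              = ((Real.sqrt (lam i) : ℂ) * (Real.sqrt (lam i) : ℂ)) * f i x * conj (f i y) := by
                ring
            _ = (lam i : ℂ) * f i x * conj (f i y) := by rw [hsq]
  have hgram : ∀ s t : Fin d, (∑ p : Fin d × Fin k, conj (Φ s p) * Φ t p) = ρss t s := by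
    intro s t
    calc ∑ p : Fin d × Fin k, conj (Φ s p) * Φ t p
        = ∑ a, ∑ u, (∑ q, conj (U (s,u) q) * conj (ψt (q.1,a)) * conj (χ q.2)) *
            (∑ r, U (t,u) r * ψt (r.1,a) * χ r.2) := by
          rw [Fintype.sum_prod_type]
          refine Finset.sum_congr rfl fun a _ => Finset.sum_congr rfl fun u _ => ?_
          simp only [hΦdef, map_sum, _root_.map_mul]
      _ = ∑ u, ∑ q, ∑ r, (conj (U (s,u) q) * conj (χ q.2) * (U (t,u) r * χ r.2)) *
            (∑ a, ψt (r.1,a) * conj (ψt (q.1,a))) := by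
          rw [Finset.sum_comm]
          refine Finset.sum_congr rfl fun u _ => ?_
          calc ∑ a, (∑ q, conj (U (s,u) q) * conj (ψt (q.1,a)) * conj (χ q.2)) *
                (∑ r, U (t,u) r * ψt (r.1,a) * χ r.2)
              = ∑ a, ∑ q, ∑ r, conj (U (s,u) q) * conj (ψt (q.1,a)) * conj (χ q.2) *
                  (U (t,u) r * ψt (r.1,a) * χ r.2) := by
                refine Finset.sum_congr rfl fun a _ => ?_
                rw [Finset.sum_mul_sum]
            _ = ∑ q, ∑ r, ∑ a, conj (U (s,u) q) * conj (ψt (q.1,a)) * conj (χ q.2) *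
                  (U (t,u) r * ψt (r.1,a) * χ r.2) := by
                rw [Finset.sum_comm]
                exact Finset.sum_congr rfl fun q _ => Finset.sum_comm
            _ = ∑ q, ∑ r, (conj (U (s,u) q) * conj (χ q.2) * (U (t,u) r * χ r.2)) *
                  (∑ a, ψt (r.1,a) * conj (ψt (q.1,a))) := by
                refine Finset.sum_congr rfl fun q _ => Finset.sum_congr rfl fun r _ => ?_
                rw [Finset.mul_sum]
                exact Finset.sum_congr rfl fun a _ => by ring
      _ = tmap U χ ρss t s := by
          simp only [tmap, ptraceNoise, Matrix.mul_apply, Matrix.conjTranspose_apply,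
            Matrix.kroneckerMap_apply, outer, hpsi]
          refine Finset.sum_congr rfl fun u _ => Finset.sum_congr rfl fun q _ => ?_
          rw [Finset.sum_mul]
          exact Finset.sum_congr rfl fun r _ => by
            simp only [Complex.star_def]
            ring
      _ = ρss t s := by rw [hstat]
  -- hf with sums unfolded
  have hf' : ∀ i i' : Fin d, (∑ a, conj (f i a) * f i' a) = if i = i' then 1 else 0 := by
    intro i i'
    rw [← hf i i']
    rfl
  have hsqne : ∀ i, ((Real.sqrt (lam i) : ℂ)) ≠ 0 := by
    intro i
    simp only [ne_eq, Complex.ofReal_eq_zero]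
    exact (Real.sqrt_ne_zero'.mpr (hlam_pos i))
  -- the vectors g i
  set g : Fin d → (Fin d × Fin k) → ℂ :=
    fun i p => ((Real.sqrt (lam i) : ℂ))⁻¹ * ∑ s, conj (f i s) * Φ s p with hgdef
  have hg : ∀ i j, inn (g i) (g j) = if i = j then 1 else 0 := by
    intro i j
    calc inn (g i) (g j)
        = ∑ p : Fin d × Fin k, ((Real.sqrt (lam i) : ℂ))⁻¹ * ((Real.sqrt (lam j) : ℂ))⁻¹ *
            ((∑ s, f i s * conj (Φ s p)) * (∑ t, conj (f j t) * Φ t p)) := by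
          unfold inn
          refine Finset.sum_congr rfl fun p _ => ?_
          simp only [hgdef, _root_.map_mul, map_sum, map_inv₀, Complex.conj_ofReal,
            Complex.conj_conj]
          ring
      _ = ∑ p : Fin d × Fin k, ((Real.sqrt (lam i) : ℂ))⁻¹ * ((Real.sqrt (lam j) : ℂ))⁻¹ *
            ∑ s, ∑ t, f i s * conj (f j t) * (conj (Φ s p) * Φ t p) := by
          refine Finset.sum_congr rfl fun p _ => ?_
          rw [Finset.sum_mul_sum]
          congr 1
          exact Finset.sum_congr rfl fun s _ => Finset.sum_congr rfl fun t _ => by ring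
      _ = ((Real.sqrt (lam i) : ℂ))⁻¹ * ((Real.sqrt (lam j) : ℂ))⁻¹ *
            ∑ s, ∑ t, f i s * conj (f j t) * ρss t s := by
          rw [← Finset.mul_sum]
          congr 1
          rw [Finset.sum_comm]
          refine Finset.sum_congr rfl fun s _ => ?_
          rw [Finset.sum_comm]
          refine Finset.sum_congr rfl fun t _ => ?_
          rw [← Finset.mul_sum, hgram]
      _ = ((Real.sqrt (lam i) : ℂ))⁻¹ * ((Real.sqrt (lam j) : ℂ))⁻¹ *
            ((lam j : ℂ) * if j = i then 1 else 0) := by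
          congr 1
          have h2 : ∀ s', (∑ t', conj (f j t') * ρss t' s') = (lam j : ℂ) * conj (f j s') := by
            intro s'
            rw [hρss]
            simp only
            calc ∑ t', conj (f j t') * ∑ m, (lam m : ℂ) * f m t' * conj (f m s')
                = ∑ m, (∑ t', conj (f j t') * f m t') * ((lam m : ℂ) * conj (f m s')) := by
                  simp only [Finset.mul_sum]
                  rw [Finset.sum_comm]
                  refine Finset.sum_congr rfl fun m _ => ?_
                  rw [Finset.sum_mul]
                  exact Finset.sum_congr rfl fun t' _ => by ring
              _ = (lam j : ℂ) * conj (f j s') := by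
                  simp only [hf', ite_mul, one_mul, zero_mul, Finset.sum_ite_eq,
                    Finset.mem_univ, if_true]
          calc ∑ s, ∑ t, f i s * conj (f j t) * ρss t s
              = ∑ s, f i s * ((lam j : ℂ) * conj (f j s)) := by
                refine Finset.sum_congr rfl fun s _ => ?_
                rw [← h2 s, Finset.mul_sum]
                exact Finset.sum_congr rfl fun t _ => by ring
            _ = (lam j : ℂ) * ∑ s, conj (f j s) * f i s := by
                rw [Finset.mul_sum]
                exact Finset.sum_congr rfl fun s _ => by ring
            _ = (lam j : ℂ) * if j = i then 1 else 0 := by rw [hf']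
      _ = if i = j then 1 else 0 := by
          by_cases hij : i = j
          · subst hij
            simp only [eq_self_iff_true, if_true, mul_one]
            rw [← hsq i]
            field_simp
            exact div_self (hsqne i)
          · rw [if_neg fun hji => hij hji.symm, if_neg hij, mul_zero, mul_zero]
  -- decomposition of Φ
  have hΦg : ∀ s' p, Φ s' p = ∑ i, (Real.sqrt (lam i) : ℂ) * f i s' * g i p := by
    intro s' p
    symm
    calc ∑ i, (Real.sqrt (lam i) : ℂ) * f i s' * g i p
        = ∑ i, f i s' * ∑ t, conj (f i t) * Φ t p := by
          refine Finset.sum_congr rfl fun i _ => ?_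
          simp only [hgdef]
          have h3 : (Real.sqrt (lam i) : ℂ) * f i s' *
              (((Real.sqrt (lam i) : ℂ))⁻¹ * ∑ t, conj (f i t) * Φ t p)
              = ((Real.sqrt (lam i) : ℂ) * ((Real.sqrt (lam i) : ℂ))⁻¹) *
                (f i s' * ∑ t, conj (f i t) * Φ t p) := by ring
          rw [h3, mul_inv_cancel₀ (hsqne i), one_mul]
      _ = ∑ t, (∑ i, f i s' * conj (f i t)) * Φ t p := by
          simp only [Finset.mul_sum]
          rw [Finset.sum_comm]
          refine Finset.sum_congr rfl fun t _ => ?_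
          rw [Finset.sum_mul]
          exact Finset.sum_congr rfl fun i _ => by ring
      _ = Φ s' p := by
          simp only [hfc, ite_mul, one_mul, zero_mul, Finset.sum_ite_eq, Finset.mem_univ,
            if_true]
  -- orthonormality of e i = f i ⊗ χ
  have he : ∀ i j, inn (vtens (f i) χ) (vtens (f j) χ) = if i = j then 1 else 0 := by
    intro i j
    calc inn (vtens (f i) χ) (vtens (f j) χ)
        = (∑ a, conj (f i a) * f j a) * (∑ u, conj (χ u) * χ u) := by
          unfold inn vtens
          rw [Finset.sum_mul_sum, Fintype.sum_prod_type]
          refine Finset.sum_congr rfl fun a _ => Finset.sum_congr rfl fun u _ => ?_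
          simp only [_root_.map_mul]
          ring
      _ = if i = j then 1 else 0 := by
          have : (∑ u, conj (χ u) * χ u) = inn χ χ := rfl
          rw [this, hinnχ, mul_one, hf']
  -- extend g and e to orthonormal bases
  have hz : 0 < k := Nat.pos_of_ne_zero hk
  set z0 : Fin k := ⟨0, hz⟩ with hz0
  have hcard : Module.finrank ℂ (EuclideanSpace ℂ (Fin d × Fin k))
      = Fintype.card (Fin d × Fin k) := finrank_euclideanSpace
  have hsub : ∀ (v : Fin d → (Fin d × Fin k) → ℂ),
      (∀ i j, inn (v i) (v j) = if i = j then 1 else 0) →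
      ∃ b : OrthonormalBasis (Fin d × Fin k) ℂ (EuclideanSpace ℂ (Fin d × Fin k)),
        ∀ i : Fin d, b (i, z0) = v i := by
    intro v hv
    have horth : Orthonormal ℂ
        (Set.restrict {α : Fin d × Fin k | α.2 = z0}
          (fun α => show EuclideanSpace ℂ (Fin d × Fin k) from WithLp.toLp 2 (v α.1))) := by
      rw [orthonormal_iff_ite]
      rintro ⟨α, hα⟩ ⟨β, hβ⟩
      have h4 : @inner ℂ (EuclideanSpace ℂ (Fin d × Fin k)) _
          (show EuclideanSpace ℂ (Fin d × Fin k) from WithLp.toLp 2 (v α.1))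
          (show EuclideanSpace ℂ (Fin d × Fin k) from WithLp.toLp 2 (v β.1)) = inn (v α.1) (v β.1) := by
        simp only [PiLp.inner_apply, RCLike.inner_apply, inn]
        exact Finset.sum_congr rfl fun _ _ => mul_comm _ _
      have h5 : ((⟨α, hα⟩ : {α : Fin d × Fin k | α.2 = z0}) = ⟨β, hβ⟩) ↔ α.1 = β.1 := by
        constructor
        · intro h
          rw [Subtype.mk_eq_mk] at h
          rw [h]
        · intro h
          apply Subtype.ext
          exact Prod.ext h (hα.trans hβ.symm)
      simp only [Set.restrict_apply, h4, hv, h5]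
      exact h4.trans (hv _ _)
    obtain ⟨b, hb⟩ := horth.exists_orthonormalBasis_extension_of_card_eq hcard
    exact ⟨b, fun i => congrArg WithLp.ofLp (hb (i, z0) rfl)⟩
  obtain ⟨gb, hgb⟩ := hsub g hg
  obtain ⟨eb, heb⟩ := hsub (fun i => vtens (f i) χ) he
  -- matrices with orthonormal columns
  have hcolmat : ∀ b : OrthonormalBasis (Fin d × Fin k) ℂ (EuclideanSpace ℂ (Fin d × Fin k)),
      (Matrix.of fun x α => b α x)ᴴ * (Matrix.of fun x α => b α x) = 1 := by
    intro b
    ext α β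
    simp only [Matrix.mul_apply, Matrix.conjTranspose_apply, Matrix.of_apply,
      Matrix.one_apply]
    have h6 := (orthonormal_iff_ite.mp b.orthonormal) α β
    simp only [PiLp.inner_apply, RCLike.inner_apply] at h6
    simpa [mul_comm] using h6
  set B : Matrix (Fin d × Fin k) (Fin d × Fin k) ℂ := Matrix.of fun x α => eb α x with hB
  set C : Matrix (Fin d × Fin k) (Fin d × Fin k) ℂ := Matrix.of fun x α => gb α x with hC
  have hBmem : B ∈ Matrix.unitaryGroup (Fin d × Fin k) ℂ := by
    rw [Matrix.mem_unitaryGroup_iff']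
    rw [Matrix.star_eq_conjTranspose]
    exact hcolmat eb
  have hCmem : C ∈ Matrix.unitaryGroup (Fin d × Fin k) ℂ := by
    rw [Matrix.mem_unitaryGroup_iff']
    rw [Matrix.star_eq_conjTranspose]
    exact hcolmat gb
  set V : Matrix (Fin d × Fin k) (Fin d × Fin k) ℂ := B * Cᴴ with hV
  have hVmem : V ∈ Matrix.unitaryGroup (Fin d × Fin k) ℂ := by
    apply mul_mem hBmem
    rw [← Matrix.star_eq_conjTranspose]
    exact Unitary.star_mem hCmem
  -- V sends g i to e i
  have hVg : ∀ i, V.mulVec (g i) = vtens (f i) χ := by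
    intro i
    rw [hV, ← Matrix.mulVec_mulVec]
    have h7 : Cᴴ.mulVec (g i) = fun α => if α = (i, z0) then 1 else 0 := by
      funext α
      have h8 := (orthonormal_iff_ite.mp gb.orthonormal) α (i, z0)
      simp only [PiLp.inner_apply, RCLike.inner_apply] at h8
      simp only [Matrix.mulVec, dotProduct, Matrix.conjTranspose_apply, Matrix.of_apply, hC]
      calc ∑ x : Fin d × Fin k, conj (gb α x) * g i x
          = ∑ x : Fin d × Fin k, conj (gb α x) * gb (i, z0) x := by
            rw [hgb i]
        _ = if α = (i, z0) then 1 else 0 := by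
              rw [← h8]; exact Finset.sum_congr rfl fun _ _ => mul_comm _ _
    rw [h7]
    funext x
    simp only [Matrix.mulVec, dotProduct, Matrix.of_apply, hB, mul_ite, mul_one, mul_zero,
      Finset.sum_ite_eq', Finset.mem_univ, if_true]
    rw [heb i]

  -- ampSys applied
  have hΦmul : ∀ s a u, ((ampSys U).mulVec (vtens ψt χ)) ((s,a),u) = Φ s (a,u) := by
    intro s a u
    simp only [Matrix.mulVec, dotProduct, Fintype.sum_prod_type, ampSys, vtens, hΦdef]
    refine Finset.sum_congr rfl fun s' _ => ?_
    rw [Finset.sum_comm]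
    refine Finset.sum_congr rfl fun u' _ => ?_
    simp only [ite_mul, zero_mul, Finset.sum_ite_eq, Finset.mem_univ, if_true]
    ring
  -- ampAbs applied
  have hampAbs : ∀ (M : Matrix (Fin d × Fin k) (Fin d × Fin k) ℂ)
      (w : (Fin d × Fin d) × Fin k → ℂ) (s a : Fin d) (u : Fin k),
      (ampAbs M).mulVec w ((s,a),u) = ∑ p : Fin d × Fin k, M (a,u) p * w ((s,p.1),p.2) := by
    intro M w s a u
    calc (ampAbs M).mulVec w ((s,a),u)
        = ∑ s', ∑ a', ∑ u', (if s = s' then M (a,u) (a',u') else 0) * w ((s',a'),u') := by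
          simp only [Matrix.mulVec, dotProduct, Fintype.sum_prod_type, ampAbs]
      _ = ∑ s', (if s = s' then ∑ a', ∑ u', M (a,u) (a',u') * w ((s',a'),u') else 0) := by
          refine Finset.sum_congr rfl fun s' _ => ?_
          split_ifs with h
          · simp
          · simp
      _ = ∑ a', ∑ u', M (a,u) (a',u') * w ((s,a'),u') := by
          rw [Finset.sum_ite_eq Finset.univ s
            (fun s' => ∑ a', ∑ u', M (a,u) (a',u') * w ((s',a'),u'))]
          simp
      _ = ∑ p : Fin d × Fin k, M (a,u) p * w ((s,p.1),p.2) := by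
          rw [Fintype.sum_prod_type]
  -- the fixed point property
  have hfix : (ampAbs V * ampSys U).mulVec (vtens ψt χ) = vtens ψt χ := by
    rw [← Matrix.mulVec_mulVec]
    funext x
    obtain ⟨⟨s, a⟩, u⟩ := x
    rw [hampAbs]
    calc ∑ p : Fin d × Fin k, V (a,u) p * ((ampSys U).mulVec (vtens ψt χ)) ((s,p.1),p.2)
        = ∑ p : Fin d × Fin k, V (a,u) p * Φ s p := by
          refine Finset.sum_congr rfl fun p _ => ?_
          rw [hΦmul s p.1 p.2]
      _ = ∑ p : Fin d × Fin k, V (a,u) p * ∑ i, (Real.sqrt (lam i) : ℂ) * f i s * g i p := by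
          refine Finset.sum_congr rfl fun p _ => ?_
          rw [← hΦg]
      _ = ∑ i, (Real.sqrt (lam i) : ℂ) * f i s * (V.mulVec (g i)) (a,u) := by
          simp only [Finset.mul_sum, Matrix.mulVec, dotProduct]
          rw [Finset.sum_comm]
          refine Finset.sum_congr rfl fun i _ => ?_
          exact Finset.sum_congr rfl fun p _ => by ring
      _ = ∑ i, (Real.sqrt (lam i) : ℂ) * f i s * vtens (f i) χ (a,u) := by
          simp only [hVg]
      _ = vtens ψt χ ((s,a),u) := by
          simp only [vtens, hψt]
          rw [Finset.sum_mul]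
          exact Finset.sum_congr rfl fun i _ => by ring
  refine ⟨V, hVmem, hfix, ?_⟩
  intro n
  unfold steps
  apply prod_fix
  intro A hA
  rw [List.mem_reverse, List.mem_ofFn] at hA
  obtain ⟨j, rfl⟩ := hA
  simpa using amp_fix n (ampAbs V * ampSys U) ψt χ hfix j
end
end

section
/- Let {W_θ} be a family of unitaries on ℂ^D ⊗ ℂ^k depending differentiably on θ, χ ∈ ℂ^k and ψ ∈ ℂ^D unit vectors with W_{θ0}(ψ⊗χ) = ψ⊗χ. For each j ≤ n let {e^[j]_i}_{i=1}^k be an orthonormal basis of ℂ^k (possibly depending on the previous outcomes) with ⟨e^[j]_i, χ⟩ ≠ 0 for all i, set K^[j]_i(θ) = ⟨e^[j]_i|W_θ|χ⟩, K^[j]_i = K^[j]_i(θ0), K̇^[j]_i = (d/dθ)K^[j]_i(θ)|_{θ0}, and c^[j]_i = ⟨e^[j]_i, χ⟩, so that K^[j]_i ψ = c^[j]_i ψ. Let p_θ(i_1,…,i_n) = ‖K^[n]_{i_n}(θ)···K^[1]_{i_1}(θ)ψ‖². Then the classical Fisher information at θ0 satisfies I(n) := Σ p_{θ0}^{−1}(p'_{θ0})²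 = Σ_{i_1,…,i_n} p_{θ0}(i_1,…,i_n) f(i_1,…,i_n)², where f(i_1,…,i_n) = 2 Re Σ_{j=1}^n ⟨ψ| K^[n]_{i_n}···K^[j+1]_{i_{j+1}} K̇^[j]_{i_j} |ψ⟩ / (c^[j]_{i_j} c^[j+1]_{i_{j+1}} ··· c^[n]_{i_n}). -/
open scoped BigOperators Matrix Kronecker ComplexConjugate Classical
open Matrix

noncomputable section

/-- Kraus operator `⟨e|W|χ⟩`. -/
def kraus {α ι : Type*} [Fintype ι] (W : Matrix (α × ι) (α × ι) ℂ) (e χ : ι → ℂ) :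
    Matrix α α ℂ :=
  fun s t => ∑ u, ∑ v, conj (e u) * W (s, u) (t, v) * χ v

/-- `A (n-1) ⋯ A 1 A 0`. -/
def kprodFin {α : Type*} [Fintype α] [DecidableEq α] {n : ℕ} (A : Fin n → Matrix α α ℂ) :
    Matrix α α ℂ :=
  ((List.ofFn A).reverse).prod

/-- `A (n-1) ⋯ A j`. -/
def kprodFrom {α : Type*} [Fintype α] [DecidableEq α] {n : ℕ} (A : Fin n → Matrix α α ℂ)
    (j : ℕ) : Matrix α α ℂ :=
  (((List.ofFn A).drop j).reverse).prod

section Aux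

variable {D : ℕ}

lemma kprodFin_zero (A : Fin 0 → Matrix (Fin D) (Fin D) ℂ) : kprodFin A = 1 := by
  simp [kprodFin]

lemma kprodFin_succ {m : ℕ} (A : Fin (m+1) → Matrix (Fin D) (Fin D) ℂ) :
    kprodFin A = A (Fin.last m) * kprodFin (fun j : Fin m => A j.castSucc) := by
  rw [kprodFin, List.ofFn_succ', List.concat_eq_append, List.reverse_append]
  simp [kprodFin]

lemma kprodFrom_castSucc {m : ℕ} (A : Fin (m+1) → Matrix (Fin D) (Fin D) ℂ) (j : Fin m) :
    kprodFrom A ((j : ℕ)+1)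
      = A (Fin.last m) * kprodFrom (fun l : Fin m => A l.castSucc) ((j : ℕ)+1) := by
  rw [kprodFrom, List.ofFn_succ', List.concat_eq_append,
    List.drop_append_of_le_length (by simp only [List.length_ofFn]; exact j.2),
    List.reverse_append]
  simp [kprodFrom]

lemma kprodFrom_top {m : ℕ} (A : Fin m → Matrix (Fin D) (Fin D) ℂ) :
    kprodFrom A m = 1 := by
  rw [kprodFrom, List.drop_eq_nil_of_le (by simp)]
  simp

lemma hasDerivAt_normSq {f : ℝ → ℂ} {f' : ℂ} {x : ℝ} (h : HasDerivAt f f' x) :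
    HasDerivAt (fun θ => Complex.normSq (f θ)) (2 * ((conj (f x)) * f').re) x := by
  have hre : HasDerivAt (fun θ => (f θ).re) f'.re x :=
    Complex.reCLM.hasFDerivAt.comp_hasDerivAt x h
  have him : HasDerivAt (fun θ => (f θ).im) f'.im x :=
    Complex.imCLM.hasFDerivAt.comp_hasDerivAt x h
  have h2 : HasDerivAt (fun θ => (f θ).re * (f θ).re + (f θ).im * (f θ).im) _ x :=
    (hre.mul hre).add (him.mul him)
  have heq : (fun θ => (f θ).re * (f θ).re + (f θ).im * (f θ).im)
      = fun θ => Complex.normSq (f θ) := by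
    funext θ; rw [Complex.normSq_apply]
  rw [heq] at h2
  convert h2 using 1
  simp [Complex.mul_re]
  ring

lemma kprod_deriv (θ0 : ℝ) (ψ : Fin D → ℂ) :
    ∀ (m : ℕ) (A : ℝ → Fin m → Matrix (Fin D) (Fin D) ℂ)
      (A' : Fin m → Matrix (Fin D) (Fin D) ℂ)
      (_ : ∀ j s t, HasDerivAt (fun θ => A θ j s t) (A' j s t) θ0)
      (c : Fin m → ℂ)
      (_ : ∀ j, (A θ0 j).mulVec ψ = c j • ψ),
      (kprodFin (A θ0)).mulVec ψ = (∏ l, c l) • ψ ∧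
      ∀ s, HasDerivAt (fun θ => (kprodFin (A θ)).mulVec ψ s)
        (∑ j, (∏ l ∈ Finset.Iio j, c l) *
          ((kprodFrom (A θ0) ((j : ℕ)+1) * A' j).mulVec ψ s)) θ0 := by
  intro m
  induction m with
  | zero =>
    intro A A' hA c hc
    constructor
    · simp [kprodFin_zero, Matrix.one_mulVec]
    · intro s
      have hconst : (fun θ => (kprodFin (A θ)).mulVec ψ s) = fun _ => ψ s := by
        funext θ; simp [kprodFin_zero, Matrix.one_mulVec]
      rw [hconst]
      simpa using hasDerivAt_const θ0 (ψ s)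
  | succ m ih =>
    intro A A' hA c hc
    set B : ℝ → Fin m → Matrix (Fin D) (Fin D) ℂ := fun θ j => A θ j.castSucc with hB
    set B' : Fin m → Matrix (Fin D) (Fin D) ℂ := fun j => A' j.castSucc with hB'
    obtain ⟨hval, hder⟩ := ih B B' (fun j s t => hA j.castSucc s t)
      (fun j => c j.castSucc) (fun j => hc j.castSucc)
    have hstep : ∀ θ, (kprodFin (A θ)).mulVec ψ
        = (A θ (Fin.last m)).mulVec ((kprodFin (B θ)).mulVec ψ) := by
      intro θ; rw [kprodFin_succ, ← Matrix.mulVec_mulVec]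
    have hprod_last : ∏ l ∈ Finset.Iio (Fin.last m), c l = ∏ l : Fin m, c l.castSucc := by
      rw [Fin.Iio_last_eq_map, Finset.prod_map]
      rfl
    have hprod_cast : ∀ j : Fin m,
        ∏ l ∈ Finset.Iio (Fin.castSucc j), c l = ∏ l ∈ Finset.Iio j, c l.castSucc := by
      intro j; rw [Fin.Iio_castSucc, Finset.prod_map]; rfl
    constructor
    · rw [hstep θ0, hval, Matrix.mulVec_smul, hc (Fin.last m), Fin.prod_univ_castSucc,
        smul_smul, mul_comm]
    · intro s
      have hfun : (fun θ => (kprodFin (A θ)).mulVec ψ s)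
          = fun θ => ∑ t, A θ (Fin.last m) s t * ((kprodFin (B θ)).mulVec ψ t) := by
        funext θ; rw [hstep θ]; rfl
      rw [hfun]
      have hd : HasDerivAt
          (fun θ => ∑ t, A θ (Fin.last m) s t * ((kprodFin (B θ)).mulVec ψ t))
          (∑ t, (A' (Fin.last m) s t * ((kprodFin (B θ0)).mulVec ψ t)
            + A θ0 (Fin.last m) s t *
              (∑ j : Fin m, (∏ l ∈ Finset.Iio j, c l.castSucc) *
                ((kprodFrom (B θ0) ((j : ℕ)+1) * B' j).mulVec ψ t)))) θ0 :=
        HasDerivAt.fun_sum fun t _ => (hA (Fin.last m) s t).mul (hder t)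
      convert hd using 1
      rw [Finset.sum_add_distrib]
      rw [Fin.sum_univ_castSucc
        (f := fun j : Fin (m+1) => (∏ l ∈ Finset.Iio j, c l) *
          ((kprodFrom (A θ0) ((j : ℕ)+1) * A' j).mulVec ψ s))]
      rw [add_comm]
      congr 1
      · -- last term
        rw [hprod_last]
        have h1 : ((Fin.last m : Fin (m+1)) : ℕ) + 1 = m + 1 := by simp
        rw [h1, kprodFrom_top, one_mul, hval]
        simp only [Matrix.mulVec, dotProduct, Pi.smul_apply, smul_eq_mul, Finset.mul_sum]
        apply Finset.sum_congr rfl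
        intro t _
        ring
      · -- castSucc terms
        have hrhs : ∀ t, A θ0 (Fin.last m) s t *
              (∑ j : Fin m, (∏ l ∈ Finset.Iio j, c l.castSucc) *
                ((kprodFrom (B θ0) ((j : ℕ)+1) * B' j).mulVec ψ t))
            = ∑ j : Fin m, (∏ l ∈ Finset.Iio j, c l.castSucc) *
                (A θ0 (Fin.last m) s t * ((kprodFrom (B θ0) ((j : ℕ)+1) * B' j).mulVec ψ t)) := by
          intro t
          rw [Finset.mul_sum]
          apply Finset.sum_congr rfl
          intro j _
          ring
        simp only [hrhs]
        rw [Finset.sum_comm]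
        apply Finset.sum_congr rfl
        intro j _
        rw [hprod_cast j]
        have hcoe : ((Fin.castSucc j : Fin (m+1)) : ℕ) = (j : ℕ) := rfl
        rw [hcoe, kprodFrom_castSucc (A θ0) j, ← Finset.mul_sum]
        congr 1
        have hmv : ∑ t, A θ0 (Fin.last m) s t * ((kprodFrom (B θ0) ((j : ℕ)+1) * B' j).mulVec ψ t)
            = ((A θ0 (Fin.last m)).mulVec ((kprodFrom (B θ0) ((j : ℕ)+1) * B' j).mulVec ψ)) s := rfl
        rw [hmv, Matrix.mulVec_mulVec, ← mul_assoc]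

end Aux

lemma nsq_smul {D : ℕ} (a : ℂ) (v : Fin D → ℂ) :
    nsq (a • v) = Complex.normSq a * nsq v := by
  simp [nsq, Complex.normSq_mul, Finset.mul_sum]

lemma prod_Iio_mul_Ici {m : ℕ} (c : Fin m → ℂ) (j : Fin m) :
    (∏ l ∈ Finset.Iio j, c l) * ∏ l ∈ Finset.Ici j, c l = ∏ l, c l := by
  rw [← Finset.prod_union (by
    simp only [Finset.disjoint_left, Finset.mem_Iio, Finset.mem_Ici]
    exact fun a ha => not_le.2 ha)]
  congr 1
  ext l
  simp [lt_or_ge]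


/-- Lemma: the output classical Fisher information as an expectation over
trajectories. With the noise units measured sequentially in (adaptive) bases `e`,
stationarity `W(ψ⊗χ) = ψ⊗χ` at `θ0` and `⟨e,χ⟩ ≠ 0`, the classical Fisher information of
the output record equals `∑ 𝐢 p(𝐢) f(𝐢)²` where
`f(𝐢) = 2 Re ∑ⱼ ⟨ψ|K_{iₙ}⋯K_{i_{j+1}} K̇_{i_j}|ψ⟩ / (c_{i_j}⋯c_{iₙ})`. -/
theorem output_CFI_sampling_formula
    (D k n : ℕ) (θ0 : ℝ)
    (W : ℝ → Matrix (Fin D × Fin k) (Fin D × Fin k) ℂ)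
    (hWu : ∀ θ, W θ ∈ Matrix.unitaryGroup (Fin D × Fin k) ℂ)
    (Wd : Matrix (Fin D × Fin k) (Fin D × Fin k) ℂ)
    (hWd : ∀ x y, HasDerivAt (fun θ => W θ x y) (Wd x y) θ0)
    (ψ : Fin D → ℂ) (χ : Fin k → ℂ) (hψ : nsq ψ = 1) (hχ : nsq χ = 1)
    (hstat : (W θ0).mulVec (vtens ψ χ) = vtens ψ χ)
    -- adaptive measurement bases (the basis at step j depends only on earlier outcomes)
    (e : Fin n → (Fin n → Fin k) → Fin k → Fin k → ℂ)
    (hadapt : ∀ (j : Fin n) (g g' : Fin n → Fin k),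
      (∀ l : Fin n, l < j → g l = g' l) → e j g = e j g')
    (honb : ∀ (j : Fin n) (g : Fin n → Fin k) (i i' : Fin k),
      inn (e j g i) (e j g i') = if i = i' then 1 else 0)
    (hchi0 : ∀ (j : Fin n) (g : Fin n → Fin k) (i : Fin k), inn (e j g i) χ ≠ 0)
    -- the eigenvalues c and the eigenvector relation K ψ = c ψ at θ0
    (c : (Fin n → Fin k) → Fin n → ℂ)
    (hc : ∀ g (j : Fin n), c g j = inn (e j g (g j)) χ)
    (hKψ : ∀ g (j : Fin n),
      (kraus (W θ0) (e j g (g j)) χ).mulVec ψ = c g j • ψ)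
    -- the derivatives of the Kraus operators at θ0
    (Kd : (Fin n → Fin k) → Fin n → Matrix (Fin D) (Fin D) ℂ)
    (hKd : ∀ g (j : Fin n) s t,
      HasDerivAt (fun θ => kraus (W θ) (e j g (g j)) χ s t) (Kd g j s t) θ0)
    -- the output likelihood and its derivative at θ0
    (p : ℝ → (Fin n → Fin k) → ℝ)
    (hp : ∀ θ g, p θ g =
      nsq ((kprodFin fun j : Fin n => kraus (W θ) (e j g (g j)) χ).mulVec ψ))
    (pd : (Fin n → Fin k) → ℝ)
    (hpd : ∀ g, HasDerivAt (fun θ => p θ g) (pd g) θ0) :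
    (∑ g ∈ Finset.univ.filter (fun g : Fin n → Fin k => p θ0 g ≠ 0),
        (p θ0 g)⁻¹ * (pd g) ^ 2)
      = ∑ g : Fin n → Fin k, p θ0 g *
          (2 * (∑ j : Fin n,
            inn ψ (((kprodFrom (fun l : Fin n => kraus (W θ0) (e l g (g l)) χ) ((j : ℕ) + 1)
                      * Kd g j).mulVec ψ))
              / ∏ l ∈ Finset.Ici j, c g l).re) ^ 2 := by
  -- notation
  have main : ∀ g : Fin n → Fin k,
      p θ0 g ≠ 0 ∧
      pd g = p θ0 g * (2 * (∑ j : Fin n,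
            inn ψ (((kprodFrom (fun l : Fin n => kraus (W θ0) (e l g (g l)) χ) ((j : ℕ) + 1)
                      * Kd g j).mulVec ψ))
              / ∏ l ∈ Finset.Ici j, c g l).re) := by
    intro g
    obtain ⟨hval, hder⟩ := kprod_deriv θ0 ψ n
      (fun θ j => kraus (W θ) (e j g (g j)) χ) (Kd g)
      (fun j s t => hKd g j s t) (c g) (fun j => hKψ g j)
    have hcz : ∀ j, c g j ≠ 0 := fun j => by rw [hc]; exact hchi0 j g (g j)
    have hPz : (∏ l, c g l) ≠ 0 := Finset.prod_ne_zero_iff.2 fun l _ => hcz l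
    have hp0 : p θ0 g = Complex.normSq (∏ l, c g l) := by
      rw [hp θ0 g, hval, nsq_smul, hψ, mul_one]
    have hpne : p θ0 g ≠ 0 := by
      rw [hp0]; exact fun h => hPz (Complex.normSq_eq_zero.1 h)
    refine ⟨hpne, ?_⟩
    -- derivative of p at θ0
    have hfun : (fun θ => p θ g) = fun θ =>
        ∑ s, Complex.normSq
          ((kprodFin fun j : Fin n => kraus (W θ) (e j g (g j)) χ).mulVec ψ s) := by
      funext θ; rw [hp θ g]; rfl
    have hD : HasDerivAt (fun θ => p θ g)
        (∑ s, 2 * ((conj (((kprodFin fun j : Fin n =>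
            kraus (W θ0) (e j g (g j)) χ).mulVec ψ) s)) *
          (∑ j, (∏ l ∈ Finset.Iio j, c g l) *
            ((kprodFrom (fun l : Fin n => kraus (W θ0) (e l g (g l)) χ) ((j : ℕ)+1)
              * Kd g j).mulVec ψ s))).re) θ0 := by
      rw [hfun]
      exact HasDerivAt.fun_sum fun s _ => hasDerivAt_normSq (hder s)
    have hpdval := (hpd g).unique hD
    rw [hpdval]
    -- now pure algebra
    rw [hval, hp0]
    have hsplit : ∀ j : Fin n,
        ((Complex.normSq (∏ l, c g l) : ℝ) : ℂ) / (∏ l ∈ Finset.Ici j, c g l)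
        = conj (∏ l, c g l) * ∏ l ∈ Finset.Iio j, c g l := by
      intro j
      have hIci : (∏ l ∈ Finset.Ici j, c g l) ≠ 0 :=
        Finset.prod_ne_zero_iff.2 fun l _ => hcz l
      rw [Complex.normSq_eq_conj_mul_self]
      rw [← prod_Iio_mul_Ici (c g) j]
      field_simp
    -- LHS: ∑ s 2 Re(conj((∏c)ψ s) * Σ_j q_j u_j s)
    have lhs_eq : (∑ s, 2 * ((conj (((∏ l, c g l) • ψ) s)) *
          (∑ j, (∏ l ∈ Finset.Iio j, c g l) *
            ((kprodFrom (fun l : Fin n => kraus (W θ0) (e l g (g l)) χ) ((j : ℕ)+1)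
              * Kd g j).mulVec ψ s))).re)
        = 2 * (∑ j, conj (∏ l, c g l) * (∏ l ∈ Finset.Iio j, c g l) *
            inn ψ ((kprodFrom (fun l : Fin n => kraus (W θ0) (e l g (g l)) χ) ((j : ℕ)+1)
              * Kd g j).mulVec ψ)).re := by
      rw [← Finset.mul_sum, ← Complex.re_sum]
      congr 2
      simp only [Finset.mul_sum]
      rw [Finset.sum_comm]
      apply Finset.sum_congr rfl
      intro j _
      rw [inn, Finset.mul_sum]
      apply Finset.sum_congr rfl
      intro s _
      simp only [Pi.smul_apply, smul_eq_mul, _root_.map_mul]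
      ring
    rw [lhs_eq]
    have key : (∑ j : Fin n, conj (∏ l, c g l) * (∏ l ∈ Finset.Iio j, c g l) *
            inn ψ ((kprodFrom (fun l : Fin n => kraus (W θ0) (e l g (g l)) χ) ((j : ℕ)+1)
              * Kd g j).mulVec ψ))
        = ((Complex.normSq (∏ l, c g l) : ℝ) : ℂ) *
          ∑ j : Fin n, inn ψ ((kprodFrom (fun l : Fin n => kraus (W θ0) (e l g (g l)) χ) ((j : ℕ)+1)
              * Kd g j).mulVec ψ) / (∏ l ∈ Finset.Ici j, c g l) := by
      rw [Finset.mul_sum]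
      apply Finset.sum_congr rfl
      intro j _
      rw [← hsplit j]
      have hIci : (∏ l ∈ Finset.Ici j, c g l) ≠ 0 :=
        Finset.prod_ne_zero_iff.2 fun l _ => hcz l
      field_simp
    rw [key, Complex.re_ofReal_mul]
    ring
  rw [Finset.filter_true_of_mem (fun g _ => (main g).1)]
  apply Finset.sum_congr rfl
  intro g _
  rw [(main g).2]
  have hpne := (main g).1
  field_simp
end
end

section
/- For the qubit amplitude-decay model with parameters λ ∈ (0,1), a = √(1−λ), b = √λ, the system-output quantum Fisher information at θ0 = 0, namely F(n) = 4 Σ_{(i_1,…,i_n) ∈ {0,1}^n} ‖ Σ_{j=1}^n K_{i_n}···K_{i_{j+1}} K̇_{i_j} K_{i_{j−1}}···K_{i_1} |0⟩ ‖², differs from 8n/(1−a) by a quantity bounded uniformly in n: there exists a constant C (depending only on λ) such that |F(n) − 8n/(1−a)| ≤ C for all n ≥ 1. -/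
open scoped BigOperators Matrix ComplexConjugate Classical
open Matrix

noncomputable section

/-- `A (j-1) ⋯ A 0`. -/
def kprodTo {α : Type*} [Fintype α] [DecidableEq α] {n : ℕ} (A : Fin n → Matrix α α ℂ)
    (j : ℕ) : Matrix α α ℂ :=
  (((List.ofFn A).take j).reverse).prod

/-- Kraus operators of the qubit amplitude-decay model at `θ0 = 0`:
`K 0 = |0⟩⟨0| + a|1⟩⟨1|`, `K 1 = b e^{iφ}|0⟩⟨1|`. -/
def Kop (a b φ : ℝ) : Fin 2 → Matrix (Fin 2) (Fin 2) ℂ := fun i =>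
  if i = 0 then !![1, 0; 0, (a : ℂ)]
  else !![0, (b : ℂ) * Complex.exp (Complex.I * φ); 0, 0]

/-- Their `θ`-derivatives at `θ0 = 0`: `K̇ 0 = i|1⟩⟨0| + i a|0⟩⟨1|`, `K̇ 1 = |1⟩⟨0|`. -/
def Kdop (a : ℝ) : Fin 2 → Matrix (Fin 2) (Fin 2) ℂ := fun i =>
  if i = 0 then !![0, Complex.I * (a : ℂ); Complex.I, 0]
  else !![0, 0; 1, 0]

/-- The initial (stationary) system state `|0⟩`. -/
def e0 : Fin 2 → ℂ := fun i => if i = 0 then 1 else 0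

/-- The system-output quantum Fisher information at `θ0 = 0`:
`F(n) = 4 ∑_𝐢 ‖∑ⱼ K_{iₙ}⋯K̇_{i_j}⋯K_{i_1}|0⟩‖²`. -/
def Fqfi (a b φ : ℝ) (n : ℕ) : ℝ :=
  4 * ∑ g : Fin n → Fin 2,
    nsq (∑ j : Fin n,
      (kprodFrom (fun l : Fin n => Kop a b φ (g l)) ((j : ℕ) + 1)
        * Kdop a (g j)
        * kprodTo (fun l : Fin n => Kop a b φ (g l)) (j : ℕ)).mulVec e0)

namespace QfiAux

section lists
variable {n : ℕ} (A : Fin n → Matrix (Fin 2) (Fin 2) ℂ) (X : Matrix (Fin 2) (Fin 2) ℂ)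

lemma ofFn_snoc : (List.ofFn (Fin.snoc A X : Fin (n+1) → _)) = (List.ofFn A).concat X := by
  rw [List.ofFn_succ']; simp

lemma kprodFrom_snoc (j : ℕ) (hj : j ≤ n) :
    kprodFrom (Fin.snoc A X : Fin (n+1) → _) j = X * kprodFrom A j := by
  unfold kprodFrom
  rw [ofFn_snoc, List.concat_eq_append,
    List.drop_append_of_le_length (by simpa using hj), List.reverse_append]
  simp

lemma kprodFrom_snoc_top :
    kprodFrom (Fin.snoc A X : Fin (n+1) → _) (n+1) = 1 := by
  unfold kprodFrom
  rw [ofFn_snoc, List.concat_eq_append, List.drop_eq_nil_of_le (by simp)]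
  simp

lemma kprodTo_snoc (j : ℕ) (hj : j ≤ n) :
    kprodTo (Fin.snoc A X : Fin (n+1) → _) j = kprodTo A j := by
  unfold kprodTo
  rw [ofFn_snoc, List.concat_eq_append,
    List.take_append_of_le_length (by simpa using hj)]

lemma kprodTo_snoc_top :
    kprodTo (Fin.snoc A X : Fin (n+1) → _) (n+1) = X * kprodTo A n := by
  unfold kprodTo
  rw [ofFn_snoc, List.concat_eq_append, List.take_of_length_le (by simp),
    List.reverse_append, List.take_of_length_le (by simp)]
  simp
end lists

variable (a b φ : ℝ)

def V (n : ℕ) (g : Fin n → Fin 2) : Fin 2 → ℂ :=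
  ∑ j : Fin n,
    (kprodFrom (fun l : Fin n => Kop a b φ (g l)) ((j : ℕ) + 1)
      * Kdop a (g j)
      * kprodTo (fun l : Fin n => Kop a b φ (g l)) (j : ℕ)).mulVec e0

def U (n : ℕ) (g : Fin n → Fin 2) : Fin 2 → ℂ :=
  (kprodTo (fun l : Fin n => Kop a b φ (g l)) n).mulVec e0

lemma Fqfi_eq (n : ℕ) : Fqfi a b φ n = 4 * ∑ g : Fin n → Fin 2, nsq (V a b φ n g) := rfl

lemma snoc_fun (n : ℕ) (g : Fin n → Fin 2) (i : Fin 2) :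
    (fun l : Fin (n+1) => Kop a b φ ((Fin.snoc g i : Fin (n+1) → Fin 2) l))
      = (Fin.snoc (fun l : Fin n => Kop a b φ (g l)) (Kop a b φ i) : Fin (n+1) → _) := by
  funext l
  refine Fin.lastCases ?_ (fun l => ?_) l <;> simp

lemma U_snoc (n : ℕ) (g : Fin n → Fin 2) (i : Fin 2) :
    U a b φ (n+1) (Fin.snoc g i) = (Kop a b φ i) *ᵥ U a b φ n g := by
  unfold U
  rw [snoc_fun, kprodTo_snoc_top, ← Matrix.mulVec_mulVec]

lemma V_snoc (n : ℕ) (g : Fin n → Fin 2) (i : Fin 2) :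
    V a b φ (n+1) (Fin.snoc g i)
      = (Kop a b φ i) *ᵥ V a b φ n g + (Kdop a i) *ᵥ U a b φ n g := by
  unfold V U
  rw [Fin.sum_univ_castSucc]
  congr 1
  · rw [show (Kop a b φ i) *ᵥ ∑ j : Fin n, _ = _ from
      (by simp only [← Matrix.mulVecLin_apply, ← map_sum] :
        (Kop a b φ i) *ᵥ (∑ j : Fin n,
          (kprodFrom (fun l : Fin n => Kop a b φ (g l)) ((j : ℕ) + 1)
            * Kdop a (g j)
            * kprodTo (fun l : Fin n => Kop a b φ (g l)) (j : ℕ)) *ᵥ e0)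
        = ∑ j : Fin n, (Kop a b φ i) *ᵥ
            ((kprodFrom (fun l : Fin n => Kop a b φ (g l)) ((j : ℕ) + 1)
            * Kdop a (g j)
            * kprodTo (fun l : Fin n => Kop a b φ (g l)) (j : ℕ)) *ᵥ e0))]
    refine Finset.sum_congr rfl fun j _ => ?_
    simp only [Fin.coe_castSucc, Fin.snoc_castSucc]
    rw [snoc_fun, kprodFrom_snoc _ _ _ (by omega : (j : ℕ) + 1 ≤ n),
      kprodTo_snoc _ _ _ (by omega : (j : ℕ) ≤ n), Matrix.mulVec_mulVec]
    simp [Fin.snoc_castSucc, Matrix.mul_assoc]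
  · simp only [Fin.val_last, Fin.snoc_last]
    rw [snoc_fun, kprodFrom_snoc_top, kprodTo_snoc _ _ n le_rfl]
    simp only [Matrix.one_mul, Matrix.mulVec_mulVec]

lemma mulVec2 (p q r s : ℂ) (v : Fin 2 → ℂ) :
    !![p,q;r,s] *ᵥ v = ![p * v 0 + q * v 1, r * v 0 + s * v 1] := by
  funext k; fin_cases k <;>
    simp [Matrix.mulVec, dotProduct, Fin.sum_univ_two]

lemma e0_eq : e0 = ![1, 0] := by
  funext k; fin_cases k <;> simp [e0]

lemma Kop_zero : Kop a b φ 0 = !![1, 0; 0, (a : ℂ)] := by simp [Kop]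
lemma Kop_one : Kop a b φ 1 = !![0, (b : ℂ) * Complex.exp (Complex.I * φ); 0, 0] := by
  simp [Kop]
lemma Kdop_zero : Kdop a 0 = !![0, Complex.I * (a : ℂ); Complex.I, 0] := by simp [Kdop]
lemma Kdop_one : Kdop a 1 = !![0, 0; 1, 0] := by simp [Kdop]

lemma snoc_eq_zero_iff (n : ℕ) (g : Fin n → Fin 2) (i : Fin 2) :
    (∀ l, (Fin.snoc g i : Fin (n+1) → Fin 2) l = 0) ↔ (∀ l, g l = 0) ∧ i = 0 := by
  constructor
  · intro h
    refine ⟨fun l => ?_, ?_⟩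
    · have := h (Fin.castSucc l); simpa using this
    · have := h (Fin.last n); simpa using this
  · rintro ⟨hg, rfl⟩ l
    refine Fin.lastCases ?_ (fun l => ?_) l <;> simp [hg]

lemma U_eq (n : ℕ) (g : Fin n → Fin 2) :
    U a b φ n g = if (∀ l, g l = 0) then e0 else 0 := by
  induction n with
  | zero =>
    simp only [show (∀ l : Fin 0, g l = 0) from fun l => l.elim0, if_true]
    unfold U kprodTo
    simp [Matrix.one_mulVec]
  | succ n ih =>
    rw [← Fin.snoc_init_self g, U_snoc, ih]
    simp only [snoc_eq_zero_iff]
    by_cases hg : ∀ l, Fin.init g l = 0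
    · rw [if_pos hg]
      by_cases hi : g (Fin.last n) = 0
      · rw [if_pos ⟨hg, hi⟩, hi, Kop_zero, e0_eq, mulVec2]
        funext k; fin_cases k <;> simp
      · rw [if_neg (fun h => hi h.2)]
        have : g (Fin.last n) = 1 := by omega
        rw [this, Kop_one, e0_eq, mulVec2]
        funext k; fin_cases k <;> simp
    · rw [if_neg hg, if_neg (fun h => hg h.1), Matrix.mulVec_zero]

/-- real geometric sum -/
def sgeom (n : ℕ) : ℝ := ∑ m ∈ Finset.range n, a ^ m

lemma zero_fun_eq_snoc (n : ℕ) :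
    (fun _ : Fin (n+1) => (0 : Fin 2)) = (Fin.snoc (fun _ : Fin n => 0) 0 : Fin (n+1) → Fin 2) := by
  funext l
  refine Fin.lastCases ?_ (fun l => ?_) l <;> simp

lemma V_zero (n : ℕ) :
    V a b φ n (fun _ => 0) = ![0, Complex.I * (sgeom a n : ℝ)] := by
  induction n with
  | zero =>
    unfold V
    funext k; fin_cases k <;> simp [sgeom]
  | succ n ih =>
    rw [zero_fun_eq_snoc, V_snoc, ih, U_eq]
    rw [if_pos (fun l => rfl), Kop_zero, Kdop_zero, e0_eq, mulVec2, mulVec2]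
    funext k; fin_cases k <;>
      simp [sgeom, geom_sum_succ, Complex.ofReal_add, Complex.ofReal_mul]
    ring

lemma nsq_two (v : Fin 2 → ℂ) : nsq v = Complex.normSq (v 0) + Complex.normSq (v 1) := by
  simp [nsq, Fin.sum_univ_two]

lemma isom (hab : a^2 + b^2 = 1) (v : Fin 2 → ℂ) :
    nsq (Kop a b φ 0 *ᵥ v) + nsq (Kop a b φ 1 *ᵥ v) = nsq v := by
  rw [Kop_zero, Kop_one, mulVec2, mulVec2]
  have hcs := Real.sin_sq_add_cos_sq φ
  simp only [nsq_two, Matrix.cons_val_zero, Matrix.cons_val_one, Matrix.head_cons,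
    Complex.normSq_apply, Complex.add_re, Complex.add_im, Complex.mul_re, Complex.mul_im,
    Complex.ofReal_re, Complex.ofReal_im, Complex.zero_re, Complex.zero_im,
    Complex.one_re, Complex.one_im, mul_comm Complex.I (φ:ℂ),
    Complex.exp_ofReal_mul_I_re, Complex.exp_ofReal_mul_I_im]
  linear_combination (b^2 * ((v 1).re^2 + (v 1).im^2)) * hcs + ((v 1).re^2 + (v 1).im^2) * hab

lemma key0 (hab : a^2 + b^2 = 1) (s : ℝ) :
    nsq (Kop a b φ 0 *ᵥ ![0, Complex.I * s] + Kdop a 0 *ᵥ e0)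
      + nsq (Kop a b φ 1 *ᵥ ![0, Complex.I * s] + Kdop a 1 *ᵥ e0)
      = s^2 + 2*a*s + 2 := by
  rw [Kop_zero, Kop_one, Kdop_zero, Kdop_one, e0_eq, mulVec2, mulVec2, mulVec2, mulVec2]
  have hcs := Real.sin_sq_add_cos_sq φ
  simp only [nsq_two, Pi.add_apply, Matrix.cons_val_zero, Matrix.cons_val_one,
    Matrix.head_cons, Complex.normSq_apply, Complex.add_re, Complex.add_im,
    Complex.mul_re, Complex.mul_im, Complex.ofReal_re, Complex.ofReal_im,
    Complex.zero_re, Complex.zero_im, Complex.one_re, Complex.one_im,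
    Complex.I_re, Complex.I_im, mul_comm Complex.I (φ:ℂ),
    Complex.exp_ofReal_mul_I_re, Complex.exp_ofReal_mul_I_im]
  linear_combination (b^2 * s^2) * hcs + s^2 * hab

lemma nsq_Vzero (s : ℝ) : nsq (![0, Complex.I * s] : Fin 2 → ℂ) = s^2 := by
  simp [nsq_two, Complex.normSq_apply, Complex.mul_re, Complex.mul_im, sq]

lemma sum_snoc (n : ℕ) (f : (Fin (n+1) → Fin 2) → ℝ) :
    ∑ G : Fin (n+1) → Fin 2, f G
      = ∑ g : Fin n → Fin 2, ∑ i : Fin 2, f (Fin.snoc g i) := by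
  rw [← Equiv.sum_comp (Fin.snocEquiv (fun _ => Fin 2)) f, Fintype.sum_prod_type,
    Finset.sum_comm]
  rfl

lemma T_succ (hab : a^2 + b^2 = 1) (n : ℕ) :
    ∑ G : Fin (n+1) → Fin 2, nsq (V a b φ (n+1) G)
      = (∑ g : Fin n → Fin 2, nsq (V a b φ n g)) + (2*a*sgeom a n + 2) := by
  rw [sum_snoc]
  have key : ∀ g : Fin n → Fin 2,
      (∑ i : Fin 2, nsq (V a b φ (n+1) (Fin.snoc g i)))
        = nsq (V a b φ n g)
          + (if g = (fun _ => 0) then 2*a*sgeom a n + 2 else 0) := by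
    intro g
    by_cases hg : g = fun _ => 0
    · subst hg
      rw [if_pos rfl, Fin.sum_univ_two, V_snoc, V_snoc, U_eq, if_pos (fun l => rfl),
        V_zero, nsq_Vzero, key0 a b φ hab]
      ring
    · rw [if_neg hg, Fin.sum_univ_two, V_snoc, V_snoc, U_eq,
        if_neg (fun h => hg (funext h)), Matrix.mulVec_zero, Matrix.mulVec_zero,
        add_zero, add_zero, isom a b φ hab, add_zero]
  rw [Finset.sum_congr rfl (fun g _ => key g), Finset.sum_add_distrib,
    Finset.sum_ite_eq' Finset.univ (fun _ => (0:Fin 2)) (fun _ => 2*a*sgeom a n + 2)]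
  simp

lemma Fqfi_zero : Fqfi a b φ 0 = 0 := by
  simp [Fqfi_eq, V, nsq]

lemma Fqfi_succ (hab : a^2 + b^2 = 1) (n : ℕ) :
    Fqfi a b φ (n+1) = Fqfi a b φ n + 8*a*sgeom a n + 8 := by
  rw [Fqfi_eq, Fqfi_eq, T_succ a b φ hab n]; ring

lemma Fqfi_closed (hab : a^2 + b^2 = 1) (n : ℕ) :
    Fqfi a b φ n * (1 - a) = 8*n - 8*a*sgeom a n := by
  induction n with
  | zero => simp [Fqfi_zero, sgeom]
  | succ n ih =>
    rw [Fqfi_succ a b φ hab,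
      show sgeom a (n+1) = a * sgeom a n + 1 from geom_sum_succ]
    push_cast
    linear_combination ih

end QfiAux

/-- `F(n)` differs from `8n/(1-a)` by a quantity bounded uniformly in `n`
(and in the known phase `φ`), by a constant depending only on `λ`. -/
theorem qfi_linear_growth_bounded_remainder
    (lam : ℝ) (hlam0 : 0 < lam) (hlam1 : lam < 1)
    (a b : ℝ) (ha : a = Real.sqrt (1 - lam)) (hb : b = Real.sqrt lam) :
    ∃ C : ℝ, ∀ (φ : ℝ) (n : ℕ), 1 ≤ n →
      |Fqfi a b φ n - 8 * n / (1 - a)| ≤ C := by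
  have ha0 : 0 ≤ a := ha ▸ Real.sqrt_nonneg _
  have ha2 : a^2 = 1 - lam := by
    rw [ha, Real.sq_sqrt (by linarith)]
  have hb2 : b^2 = lam := by
    rw [hb, Real.sq_sqrt (by linarith)]
  have hab : a^2 + b^2 = 1 := by rw [ha2, hb2]; ring
  have ha1 : a < 1 := by nlinarith
  have h1a : (0:ℝ) < 1 - a := by linarith
  refine ⟨8 / (1-a)^2, fun φ n _ => ?_⟩
  have hcl := QfiAux.Fqfi_closed a b φ hab n
  have hs0 : 0 ≤ QfiAux.sgeom a n :=
    Finset.sum_nonneg fun m _ => pow_nonneg ha0 m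
  have hs1 : QfiAux.sgeom a n * (1 - a) ≤ 1 := by
    have h := geom_sum_mul a n
    have hpn : 0 ≤ a ^ n := pow_nonneg ha0 n
    have : QfiAux.sgeom a n * (a - 1) = a ^ n - 1 := h
    nlinarith
  have heq : Fqfi a b φ n - 8 * n / (1 - a) = -(8*a*QfiAux.sgeom a n) / (1-a) := by
    field_simp
    linear_combination hcl
  rw [heq, abs_div, abs_neg, abs_of_nonneg (by positivity : (0:ℝ) ≤ 8*a*QfiAux.sgeom a n),
    abs_of_nonneg (le_of_lt h1a), div_le_div_iff₀ h1a (by positivity)]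
  nlinarith [mul_le_mul_of_nonneg_left hs1
    (mul_nonneg (by linarith : (0:ℝ) ≤ 8*a) h1a.le)]
end
end

section
/- Let ψ_θ be a unit-vector family in a finite-dimensional complex Hilbert space H of dimension D, differentiable in θ, with ⟨ψ_{θ0}, ψ̇_{θ0}⟩ = 0, and set M = |ψ_{θ0}⟩⟨ψ̇_{θ0}| − |ψ̇_{θ0}⟩⟨ψ_{θ0}|. Let {e_i}_{i=1}^D be an orthonormal basis of H satisfying ⟨e_i| M |e_i⟩ = 0 and |⟨e_i, ψ_{θ0}⟩|² = 1/D for all i. Then the rank-one projective measurement in this basis saturates the quantum Cramér–Rao bound at θ0: writing p_θ(i) = |⟨e_i, ψ_θ⟩|², the classical Fisher information Σ_{i=1}^D p_{θ0}(i)^{−1} (p'_{θ0}(i))² equals the quantum Fisher information 4‖ψ̇_{θ0}‖². -/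
open scoped ComplexInnerProductSpace BigOperators Classical

noncomputable section

/-- Zhou–Zou–Jiang saturation condition. For a differentiable pure state
model `ψ_θ` with `⟪ψ_{θ0}, ψ̇_{θ0}⟫ = 0`, any orthonormal basis `{e i}` satisfying
`⟨e i|M|e i⟩ = 0` (with `M = |ψ⟩⟨ψ̇| - |ψ̇⟩⟨ψ|`) and `|⟨e i, ψ_{θ0}⟩|² = 1/D` yields a
projective measurement whose classical Fisher information equals the quantum Fisher
information `4‖ψ̇_{θ0}‖²`. -/
theorem projective_measurement_saturates_QCRB
    {H : Type*} [NormedAddCommGroup H] [InnerProductSpace ℂ H] [FiniteDimensional ℂ H]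
    (D : ℕ) (hD : Module.finrank ℂ H = D)
    (θ0 : ℝ) (ψ : ℝ → H) (hψ : ∀ θ, ‖ψ θ‖ = 1)
    (ψd : H) (hψd : HasDerivAt ψ ψd θ0)
    (hphase : ⟪ψ θ0, ψd⟫ = 0)
    (e : OrthonormalBasis (Fin D) ℂ H)
    -- ⟨e i| M |e i⟩ = 0 for M = |ψ_{θ0}⟩⟨ψ̇_{θ0}| - |ψ̇_{θ0}⟩⟨ψ_{θ0}|
    (hM : ∀ i, ⟪e i, ψ θ0⟫ * ⟪ψd, e i⟫ - ⟪e i, ψd⟫ * ⟪ψ θ0, e i⟫ = 0)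
    (hunif : ∀ i, ‖⟪e i, ψ θ0⟫‖ ^ 2 = 1 / D)
    (p : ℝ → Fin D → ℝ) (hp : ∀ θ i, p θ i = ‖⟪e i, ψ θ⟫‖ ^ 2)
    (pd : Fin D → ℝ) (hpd : ∀ i, HasDerivAt (fun θ => p θ i) (pd i) θ0) :
    ∑ i : Fin D, (p θ0 i)⁻¹ * (pd i) ^ 2 = 4 * ‖ψd‖ ^ 2 := by
  classical
  -- D is positive
  have hH : ψ θ0 ≠ 0 := by
    intro h
    have := hψ θ0
    rw [h, norm_zero] at this
    norm_num at this
  have hDpos : 0 < D := by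
    rw [← hD]
    have : Nontrivial H := ⟨ψ θ0, 0, hH⟩
    exact Module.finrank_pos
  have hDne : (D : ℝ) ≠ 0 := Nat.cast_ne_zero.mpr hDpos.ne'
  set c : Fin D → ℂ := fun i => ⟪e i, ψ θ0⟫ with hc
  set cd : Fin D → ℂ := fun i => ⟪e i, ψd⟫ with hcd
  -- derivative of the inner product coefficient
  have hcder : ∀ i, HasDerivAt (fun θ => (⟪e i, ψ θ⟫ : ℂ)) (cd i) θ0 := by
    intro i
    have := (hasDerivAt_const θ0 (e i)).inner ℂ hψd
    simpa using this
  -- compute pd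
  have hpd_eq : ∀ i, pd i = 2 * ((starRingEnd ℂ) (c i) * cd i).re := by
    intro i
    have h1 : HasDerivAt (fun θ => (⟪(⟪e i, ψ θ⟫ : ℂ), (⟪e i, ψ θ⟫ : ℂ)⟫ : ℂ))
        (⟪c i, cd i⟫ + ⟪cd i, c i⟫) θ0 := (hcder i).inner ℂ (hcder i)
    have h2 : HasDerivAt (fun θ => ((⟪(⟪e i, ψ θ⟫ : ℂ), (⟪e i, ψ θ⟫ : ℂ)⟫ : ℂ)).re)
        ((⟪c i, cd i⟫ + ⟪cd i, c i⟫ : ℂ).re) θ0 :=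
      (Complex.reCLM.hasFDerivAt.comp_hasDerivAt θ0 h1)
    have h3 : (fun θ => ((⟪(⟪e i, ψ θ⟫ : ℂ), (⟪e i, ψ θ⟫ : ℂ)⟫ : ℂ)).re)
        = fun θ => p θ i := by
      funext θ
      rw [hp θ i, inner_self_eq_norm_sq_to_K]
      norm_cast
    rw [h3] at h2
    have := (hpd i).unique h2
    rw [this]
    have hre : ((⟪c i, cd i⟫ + ⟪cd i, c i⟫ : ℂ)).re
        = 2 * ((starRingEnd ℂ) (c i) * cd i).re := by
      have : (⟪cd i, c i⟫ : ℂ) = (starRingEnd ℂ) (⟪c i, cd i⟫ : ℂ) := by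
        rw [← inner_conj_symm]
      rw [Complex.add_re, this, Complex.conj_re]
      have : (⟪c i, cd i⟫ : ℂ) = (starRingEnd ℂ) (c i) * cd i := by
        rw [RCLike.inner_apply]; ring
      rw [this]; ring
    rw [hre]
  -- reality of z i from hM
  have hz_real : ∀ i, ((starRingEnd ℂ) (c i) * cd i).im = 0 := by
    intro i
    have h := hM i
    have h1 : (⟪ψd, e i⟫ : ℂ) = (starRingEnd ℂ) (cd i) := by
      rw [hcd]; exact (inner_conj_symm _ _).symm
    have h2 : (⟪ψ θ0, e i⟫ : ℂ) = (starRingEnd ℂ) (c i) := by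
      rw [hc]; exact (inner_conj_symm _ _).symm
    rw [h1, h2] at h
    have hconj : (starRingEnd ℂ) ((starRingEnd ℂ) (c i) * cd i)
        = (starRingEnd ℂ) (c i) * cd i := by
      have hs := sub_eq_zero.mp h
      rw [map_mul]
      simp only [Complex.conj_conj]
      linear_combination hs
    have := Complex.conj_eq_iff_im.mp hconj
    exact this
  -- pointwise identity for each term
  have hterm : ∀ i, (p θ0 i)⁻¹ * (pd i) ^ 2 = 4 * Complex.normSq (cd i) := by
    intro i
    have hp0 : p θ0 i = 1 / D := by rw [hp]; exact hunif i
    set z : ℂ := (starRingEnd ℂ) (c i) * cd i with hz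
    have him : z.im = 0 := hz_real i
    have hre2 : z.re ^ 2 = Complex.normSq z := by
      rw [Complex.normSq_apply, him]; ring
    have hnormSq : Complex.normSq z = Complex.normSq (c i) * Complex.normSq (cd i) := by
      rw [hz, Complex.normSq_mul, Complex.normSq_conj]
    have hcsq : Complex.normSq (c i) = 1 / D := by
      rw [Complex.normSq_eq_norm_sq]
      exact hunif i
    rw [hp0, hpd_eq i, ← hz]
    rw [one_div, inv_inv]
    have : (2 * z.re) ^ 2 = 4 * (z.re ^ 2) := by ring
    rw [this, hre2, hnormSq, hcsq]
    field_simp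
  rw [Finset.sum_congr rfl fun i _ => hterm i]
  -- Parseval
  have hpar : ∑ i : Fin D, Complex.normSq (cd i) = ‖ψd‖ ^ 2 := by
    have h := e.sum_inner_mul_inner ψd ψd
    have h2 : ∀ i : Fin D, (⟪ψd, e i⟫ : ℂ) * ⟪e i, ψd⟫ = (Complex.normSq (cd i) : ℂ) := by
      intro i
      rw [show (⟪ψd, e i⟫ : ℂ) = (starRingEnd ℂ) (cd i) from (inner_conj_symm _ _).symm,
        Complex.normSq_eq_conj_mul_self]
    rw [Finset.sum_congr rfl fun i _ => h2 i] at h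
    have h3 : ((∑ i : Fin D, (Complex.normSq (cd i) : ℂ))).re = ((⟪ψd, ψd⟫ : ℂ)).re := by
      rw [h]
    rw [Complex.re_sum] at h3
    simp only [Complex.ofReal_re] at h3
    rw [h3, inner_self_eq_norm_sq_to_K]
    norm_cast
  rw [← Finset.mul_sum, hpar]
end
end

section
/- Let ψ_θ be a unit-vector family in a finite-dimensional complex Hilbert space H, differentiable in θ. For any orthonormal basis {e_i} of H, the classical Fisher information of the corresponding projective measurement is bounded by the quantum Fisher information: Σ_{i: p_{θ0}(i)>0} p_{θ0}(i)^{−1} (p'_{θ0}(i))² ≤ 4(‖ψ̇_{θ0}‖² − |⟨ψ_{θ0}, ψ̇_{θ0}⟩|²), where p_θ(i) = |⟨e_i, ψ_θ⟩|². -/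
open scoped ComplexInnerProductSpace BigOperators Classical

noncomputable section

/-- classical Fisher information of any projective measurement is bounded
by the quantum Fisher information. For a differentiable unit-vector family `ψ_θ` and any
orthonormal basis `{e i}`, the classical Fisher information of the measurement
`p_θ(i) = |⟨e i, ψ_θ⟩|²` at `θ0` is at most `4(‖ψ̇‖² - |⟨ψ, ψ̇⟩|²)`. -/
theorem projective_CFI_le_QFI
    {H : Type*} [NormedAddCommGroup H] [InnerProductSpace ℂ H] [FiniteDimensional ℂ H]
    {ι : Type*} [Fintype ι]
    (θ0 : ℝ) (ψ : ℝ → H) (hψ : ∀ θ, ‖ψ θ‖ = 1)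
    (ψd : H) (hψd : HasDerivAt ψ ψd θ0)
    (e : OrthonormalBasis ι ℂ H)
    (p : ℝ → ι → ℝ) (hp : ∀ θ i, p θ i = ‖⟪e i, ψ θ⟫‖ ^ 2)
    (pd : ι → ℝ) (hpd : ∀ i, HasDerivAt (fun θ => p θ i) (pd i) θ0) :
    (∑ i ∈ Finset.univ.filter (fun i => p θ0 i ≠ 0), (p θ0 i)⁻¹ * (pd i) ^ 2)
      ≤ 4 * (‖ψd‖ ^ 2 - ‖⟪ψ θ0, ψd⟫‖ ^ 2) := by
  set c : ℂ := ⟪ψ θ0, ψd⟫ with hc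
  set φ : H := ψd - c • ψ θ0 with hφ
  -- Re c = 0
  have hconst : HasDerivAt (fun θ => (⟪ψ θ, ψ θ⟫ : ℂ)) (⟪ψ θ0, ψd⟫ + ⟪ψd, ψ θ0⟫) θ0 :=
    hψd.inner ℂ hψd
  have hone : (fun θ => (⟪ψ θ, ψ θ⟫ : ℂ)) = fun _ => (1 : ℂ) := by
    funext θ
    rw [inner_self_eq_norm_sq_to_K, hψ θ]
    norm_num
  have hzero : HasDerivAt (fun θ => (⟪ψ θ, ψ θ⟫ : ℂ)) 0 θ0 := by
    rw [hone]; exact hasDerivAt_const _ _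
  have hcre : c.re = 0 := by
    have h0 : c + (starRingEnd ℂ) c = 0 := by
      have h := hconst.unique hzero
      rw [hc, inner_conj_symm]
      exact h
    have := congrArg Complex.re h0
    simp at this
    linarith
  -- derivative of inner products
  have hbd : ∀ i, HasDerivAt (fun θ => (⟪e i, ψ θ⟫ : ℂ)) ⟪e i, ψd⟫ θ0 := by
    intro i
    have := (hasDerivAt_const θ0 (e i)).inner ℂ hψd
    simpa using this
  -- pd i = 2 * re (conj a * b')
  have hpd' : ∀ i, pd i = 2 * ((starRingEnd ℂ) ⟪e i, ψ θ0⟫ * ⟪e i, φ⟫).re := by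
    intro i
    have h1 : HasDerivAt (fun θ => (inner (𝕜 := ℝ) (⟪e i, ψ θ⟫ : ℂ) (⟪e i, ψ θ⟫ : ℂ) : ℝ))
        (inner (𝕜 := ℝ) (⟪e i, ψ θ0⟫ : ℂ) (⟪e i, ψd⟫ : ℂ)
          + inner (𝕜 := ℝ) (⟪e i, ψd⟫ : ℂ) (⟪e i, ψ θ0⟫ : ℂ)) θ0 :=
      (hbd i).inner ℝ (hbd i)
    have h2 : (fun θ => (inner (𝕜 := ℝ) (⟪e i, ψ θ⟫ : ℂ) (⟪e i, ψ θ⟫ : ℂ) : ℝ)) = fun θ => p θ i := by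
      funext θ; rw [real_inner_self_eq_norm_sq, hp]
    rw [h2] at h1
    have h3 : pd i = inner (𝕜 := ℝ) (⟪e i, ψ θ0⟫ : ℂ) (⟪e i, ψd⟫ : ℂ)
        + inner (𝕜 := ℝ) (⟪e i, ψd⟫ : ℂ) (⟪e i, ψ θ0⟫ : ℂ) := (hpd i).unique h1
    have h4 : ∀ z w : ℂ, (inner (𝕜 := ℝ) z w : ℝ) = ((starRingEnd ℂ) z * w).re := by
      intro z w
      rw [real_inner_eq_re_inner ℂ]
      simp [RCLike.inner_apply]; ring
    rw [h3, h4, h4]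
    have h5 : (⟪e i, φ⟫ : ℂ) = ⟪e i, ψd⟫ - c * ⟪e i, ψ θ0⟫ := by
      rw [hφ, inner_sub_right, inner_smul_right]
    rw [h5]
    simp only [mul_sub, Complex.sub_re, Complex.mul_re, Complex.mul_im, Complex.conj_re, Complex.conj_im, hcre]
    ring
  -- pointwise bound
  have key : ∀ i ∈ Finset.univ.filter (fun i => p θ0 i ≠ 0),
      (p θ0 i)⁻¹ * (pd i) ^ 2 ≤ 4 * ‖(⟪e i, φ⟫ : ℂ)‖ ^ 2 := by
    intro i hi
    rw [Finset.mem_filter] at hi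
    have hppos : 0 < p θ0 i := by
      rcases lt_or_eq_of_le (by rw [hp]; positivity : (0:ℝ) ≤ p θ0 i) with h | h
      · exact h
      · exact absurd h.symm hi.2
    set z : ℂ := (starRingEnd ℂ) ⟪e i, ψ θ0⟫ * ⟪e i, φ⟫ with hz
    have h1 : (pd i) ^ 2 ≤ 4 * ‖z‖ ^ 2 := by
      rw [hpd' i]
      have : (2 * z.re) ^ 2 = 4 * z.re ^ 2 := by ring
      rw [this]
      have : z.re ^ 2 ≤ ‖z‖ ^ 2 :=
        calc z.re ^ 2 = |z.re| ^ 2 := (sq_abs _).symm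
          _ ≤ ‖z‖ ^ 2 := pow_le_pow_left₀ (abs_nonneg _) (Complex.abs_re_le_norm z) 2
          _ = ‖z‖ ^ 2 := rfl
      linarith
    have h2 : ‖z‖ ^ 2 = p θ0 i * ‖(⟪e i, φ⟫ : ℂ)‖ ^ 2 := by
      rw [hz, norm_mul, mul_pow, hp, RCLike.norm_conj]
    calc (p θ0 i)⁻¹ * (pd i) ^ 2 ≤ (p θ0 i)⁻¹ * (4 * ‖z‖ ^ 2) := by
          exact mul_le_mul_of_nonneg_left h1 (by positivity)
      _ = 4 * ‖(⟪e i, φ⟫ : ℂ)‖ ^ 2 := by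
          rw [h2]; field_simp
  -- sum bound
  have hsum : ∑ i ∈ Finset.univ.filter (fun i => p θ0 i ≠ 0), (p θ0 i)⁻¹ * (pd i) ^ 2
      ≤ ∑ i, 4 * ‖(⟪e i, φ⟫ : ℂ)‖ ^ 2 := by
    refine le_trans (Finset.sum_le_sum key) ?_
    refine Finset.sum_le_sum_of_subset_of_nonneg (Finset.filter_subset _ _) ?_
    intro i _ _; positivity
  -- total: ∑ ‖⟪e i, φ⟫‖² = ‖φ‖²
  have hnorm : ∑ i, ‖(⟪e i, φ⟫ : ℂ)‖ ^ 2 = ‖φ‖ ^ 2 := by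
    have := e.repr.norm_map φ
    rw [← this, EuclideanSpace.norm_eq, Real.sq_sqrt (by positivity)]
    simp [e.repr_apply_apply]
  -- ‖φ‖² = ‖ψd‖² - ‖c‖²
  have hφn : ‖φ‖ ^ 2 = ‖ψd‖ ^ 2 - ‖c‖ ^ 2 := by
    rw [hφ, @norm_sub_sq ℂ]
    have h1 : (⟪ψd, c • ψ θ0⟫ : ℂ) = c * (starRingEnd ℂ) c := by
      rw [inner_smul_right, ← inner_conj_symm, ← hc]
    have h2 : ‖c • ψ θ0‖ ^ 2 = ‖c‖ ^ 2 := by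
      rw [norm_smul, hψ θ0, mul_one]
    rw [h1, h2]
    have : (c * (starRingEnd ℂ) c).re = ‖c‖ ^ 2 := by
      rw [mul_comm, Complex.normSq_eq_conj_mul_self.symm, ← Complex.sq_norm]
      simp [← Complex.ofReal_pow, Complex.ofReal_re]
    rw [RCLike.re_to_complex, this]
    ring
  calc ∑ i ∈ Finset.univ.filter (fun i => p θ0 i ≠ 0), (p θ0 i)⁻¹ * (pd i) ^ 2
      ≤ ∑ i, 4 * ‖(⟪e i, φ⟫ : ℂ)‖ ^ 2 := hsum
    _ = 4 * ‖φ‖ ^ 2 := by rw [← Finset.mul_sum, hnorm]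
    _ = 4 * (‖ψd‖ ^ 2 - ‖c‖ ^ 2) := by rw [hφn]
end
end

section
/- Let ψ_θ be a differentiable unit-vector family in a finite-dimensional bipartite Hilbert space H_s ⊗ H_o with ⟨ψ_{θ0}, ψ̇_{θ0}⟩ = 0 and quantum Fisher information F = 4‖ψ̇_{θ0}‖² at θ0. Let {P_i = |e^o_i⟩⟨e^o_i|} be a rank-one projective measurement on H_o with outcome distribution p_θ(i) = ⟨ψ_θ|(1⊗P_i)|ψ_θ⟩, classical Fisher information I(X) = Σ_{i: p_{θ0}(i)>0} p_{θ0}(i)^{−1}(p'_{θ0}(i))² at θ0, and conditional post-measurement states ψ_θ(i) = (1⊗P_i)ψ_θ / ‖(1⊗P_i)ψ_θ‖ with pure-state quantum Fisher informations F(ψ(i)) = 4(‖ψ̇_{θ0}(i)‖² − |⟨ψ_{θ0}(i), ψ̇_{θ0}(i)⟩|²). Suppose there exists, for each outcome i, a rank-one projective measurement on H_s whose conditional classical Fisher information I(Y|X=i) on the state ψ_θ(i) is such that the total classical Fisher information of the two-stage measurement equals F, i.e. I(X) + Σ_i p_{θ0}(i) I(Y|X=i) = F. Then F − I(X) = Σ_i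 p_{θ0}(i) F(ψ(i)). -/
open scoped BigOperators ComplexConjugate Classical

noncomputable section

namespace RII

lemma nsq_nonneg {ι : Type*} [Fintype ι] (v : ι → ℂ) : 0 ≤ nsq v :=
  Finset.sum_nonneg fun _ _ => Complex.normSq_nonneg _

lemma inn_self {ι : Type*} [Fintype ι] (v : ι → ℂ) : inn v v = (nsq v : ℂ) := by
  simp [inn, nsq, Complex.normSq_eq_conj_mul_self]

lemma inn_conj {ι : Type*} [Fintype ι] (v w : ι → ℂ) : inn w v = conj (inn v w) := by
  simp only [inn, map_sum, map_mul, Complex.conj_conj]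
  exact Finset.sum_congr rfl fun x _ => by ring

lemma inn_comb_right {ι : Type*} [Fintype ι] (v w z : ι → ℂ) (a b : ℂ) :
    inn v (fun x => a * w x + b * z x) = a * inn v w + b * inn v z := by
  simp only [inn, Finset.mul_sum, ← Finset.sum_add_distrib]
  exact Finset.sum_congr rfl fun x _ => by ring

lemma inn_smul_left_real {ι : Type*} [Fintype ι] (a : ℝ) (v w : ι → ℂ) :
    inn (fun x => (a : ℂ) * v x) w = (a : ℂ) * inn v w := by
  simp only [inn, Finset.mul_sum, map_mul, Complex.conj_ofReal]
  exact Finset.sum_congr rfl fun x _ => by ring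

lemma nsq_smul_real {ι : Type*} [Fintype ι] (a : ℝ) (v : ι → ℂ) :
    nsq (fun x => (a : ℂ) * v x) = a ^ 2 * nsq v := by
  simp [nsq, Complex.normSq_mul, Finset.mul_sum, Complex.normSq_ofReal, sq]

lemma nsq_comb {ι : Type*} [Fintype ι] (a b : ℝ) (v w : ι → ℂ) :
    nsq (fun x => (a : ℂ) * v x + (b : ℂ) * w x)
      = a ^ 2 * nsq v + b ^ 2 * nsq w + 2 * a * b * (inn v w).re := by
  simp only [nsq, inn, Complex.re_sum, Finset.mul_sum, ← Finset.sum_add_distrib]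
  refine Finset.sum_congr rfl fun x _ => ?_
  simp [Complex.normSq_apply, Complex.add_re, Complex.add_im, Complex.mul_re, Complex.mul_im,
    Complex.ofReal_re, Complex.ofReal_im, Complex.conj_re, Complex.conj_im]
  ring

lemma nsq_add_smul {ι : Type*} [Fintype ι] (c : ℂ) (v w : ι → ℂ) :
    nsq (fun x => v x + c * w x)
      = nsq v + Complex.normSq c * nsq w + 2 * (c * inn v w).re := by
  simp only [nsq, inn, Finset.mul_sum, Complex.re_sum, ← Finset.sum_add_distrib]
  refine Finset.sum_congr rfl fun x _ => ?_
  simp [Complex.normSq_apply, Complex.add_re, Complex.add_im, Complex.mul_re, Complex.mul_im,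
    Complex.conj_re, Complex.conj_im]
  ring

lemma hder_normSq {f : ℝ → ℂ} {z : ℂ} {x : ℝ} (h : HasDerivAt f z x) :
    HasDerivAt (fun t => Complex.normSq (f t)) (2 * (conj (f x) * z).re) x := by
  have h1 : HasDerivAt (fun t => (f t).re) z.re x :=
    (Complex.reCLM.hasFDerivAt.comp_hasDerivAt x h)
  have h2 : HasDerivAt (fun t => (f t).im) z.im x :=
    (Complex.imCLM.hasFDerivAt.comp_hasDerivAt x h)
  have h3 := (h1.mul h1).add (h2.mul h2)
  have e : ∀ t, Complex.normSq (f t) = (f t).re * (f t).re + (f t).im * (f t).im := by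
    intro t; simp [Complex.normSq_apply]
  simp only [e]
  refine h3.congr_deriv ?_
  simp only [Complex.mul_re, Complex.conj_re, Complex.conj_im]
  ring

lemma cs_re {ι : Type*} [Fintype ι] (a b : ι → ℂ) :
    (∑ u, (conj (a u) * b u).re) ^ 2 ≤ nsq a * nsq b := by
  classical
  have := Finset.sum_mul_sq_le_sq_mul_sq Finset.univ
    (fun x : ι × Bool => if x.2 then (a x.1).re else (a x.1).im)
    (fun x : ι × Bool => if x.2 then (b x.1).re else (b x.1).im)
  simp only [Fintype.sum_prod_type, Fintype.sum_bool, if_true, if_false, Bool.false_eq_true] at this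
  convert this using 2
  · rfl
  · refine Finset.sum_congr rfl fun u _ => ?_
    simp [Complex.mul_re]
  · simp [nsq, Complex.normSq_apply]; ring_nf
  · simp [nsq, Complex.normSq_apply]; ring_nf

lemma onb_complete {ι : Type*} [Fintype ι] [DecidableEq ι] (e : ι → ι → ℂ)
    (h : ∀ i i', inn (e i) (e i') = if i = i' then 1 else 0) (u v : ι) :
    ∑ i, e i u * conj (e i v) = if u = v then 1 else 0 := by
  classical
  let M : Matrix ι ι ℂ := Matrix.of fun i v => conj (e i v)
  have hM : M * M.conjTranspose = 1 := by
    ext i i'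
    simp only [Matrix.mul_apply, Matrix.conjTranspose_apply, Matrix.one_apply, M, Matrix.of_apply]
    have := h i i'
    simp only [inn] at this
    simpa [mul_comm] using this
  have hM2 : M.conjTranspose * M = 1 := mul_eq_one_comm.mp hM
  have := congrFun (congrFun hM2 u) v
  simp only [Matrix.mul_apply, Matrix.conjTranspose_apply, Matrix.one_apply, M, Matrix.of_apply] at this
  simpa [mul_comm] using this

lemma onb_parseval {ι : Type*} [Fintype ι] [DecidableEq ι] (e : ι → ι → ℂ)
    (h : ∀ i i', inn (e i) (e i') = if i = i' then 1 else 0) (w z : ι → ℂ) :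
    ∑ i, conj (∑ v, conj (e i v) * w v) * (∑ v, conj (e i v) * z v)
      = ∑ v, conj (w v) * z v := by
  classical
  have key : ∀ u v : ι, ∑ i, e i u * conj (e i v) = if u = v then 1 else 0 :=
    onb_complete e h
  calc ∑ i, conj (∑ v, conj (e i v) * w v) * (∑ v, conj (e i v) * z v)
      = ∑ i, ∑ u, ∑ v, (conj (w u) * z v) * (e i u * conj (e i v)) := by
        refine Finset.sum_congr rfl fun i _ => ?_
        rw [map_sum, Finset.sum_mul_sum]
        refine Finset.sum_congr rfl fun u _ => Finset.sum_congr rfl fun v _ => ?_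
        simp only [map_mul, Complex.conj_conj]
        ring
    _ = ∑ u, ∑ v, (conj (w u) * z v) * ∑ i, (e i u * conj (e i v)) := by
        rw [Finset.sum_comm]
        refine Finset.sum_congr rfl fun u _ => ?_
        rw [Finset.sum_comm]
        refine Finset.sum_congr rfl fun v _ => ?_
        rw [Finset.mul_sum]
    _ = ∑ v, conj (w v) * z v := by
        simp only [key]
        simp [Finset.sum_ite_eq]

lemma onb_parseval_nsq {ι : Type*} [Fintype ι] [DecidableEq ι] (e : ι → ι → ℂ)
    (h : ∀ i i', inn (e i) (e i') = if i = i' then 1 else 0) (w : ι → ℂ) :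
    ∑ i, Complex.normSq (∑ v, conj (e i v) * w v) = ∑ v, Complex.normSq (w v) := by
  have := onb_parseval e h w w
  have h2 : ((∑ i, Complex.normSq (∑ v, conj (e i v) * w v) : ℝ) : ℂ)
      = ((∑ v, Complex.normSq (w v) : ℝ) : ℂ) := by
    push_cast
    simpa [Complex.normSq_eq_conj_mul_self] using this
  exact_mod_cast h2

lemma sum_inn_phi {ι κ : Type*} [Fintype ι] [Fintype κ] [DecidableEq κ]
    (e : κ → κ → ℂ) (h : ∀ i i', inn (e i) (e i') = if i = i' then 1 else 0)
    (w z : ι × κ → ℂ) :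
    ∑ i, inn (fun x : ι × κ => e i x.2 * ∑ v, conj (e i v) * w (x.1, v))
             (fun x : ι × κ => e i x.2 * ∑ v, conj (e i v) * z (x.1, v)) = inn w z := by
  classical
  have h1 : ∀ i, inn (fun x : ι × κ => e i x.2 * ∑ v, conj (e i v) * w (x.1, v))
             (fun x : ι × κ => e i x.2 * ∑ v, conj (e i v) * z (x.1, v))
      = ∑ s : ι, conj (∑ v, conj (e i v) * w (s, v)) * (∑ v, conj (e i v) * z (s, v)) := by
    intro i
    simp only [inn, Fintype.sum_prod_type]
    refine Finset.sum_congr rfl fun s _ => ?_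
    have : ∀ u : κ, conj (e i u * ∑ v, conj (e i v) * w (s, v))
        * (e i u * ∑ v, conj (e i v) * z (s, v))
        = (conj (e i u) * e i u) *
          (conj (∑ v, conj (e i v) * w (s, v)) * (∑ v, conj (e i v) * z (s, v))) := by
      intro u; simp only [map_mul]; ring
    rw [Finset.sum_congr rfl fun u _ => this u, ← Finset.sum_mul]
    have h2 : ∑ u, conj (e i u) * e i u = 1 := by
      have := h i i; simp only [inn, if_pos rfl] at this; exact this
    rw [h2, one_mul]
  simp only [h1]
  rw [Finset.sum_comm]
  simp only [onb_parseval e h]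
  simp [inn, Fintype.sum_prod_type]

end RII

/-- remaining information identity for two-stage measurements on a
bipartite pure state. If the first-stage measurement on `H_o` combined with suitable
second-stage measurements on `H_s` attains the quantum Fisher information `F`, then
`F - I(X) = ∑ᵢ p_{θ0}(i) F(ψ(i))`, the expected quantum Fisher information of the
conditional post-measurement states. -/
theorem remaining_information_identity
    (ds dOut : ℕ) (θ0 : ℝ)
    (ψ : ℝ → (Fin ds × Fin dOut) → ℂ) (hψ : ∀ θ, nsq (ψ θ) = 1)
    (ψd : (Fin ds × Fin dOut) → ℂ)
    (hψd : ∀ x, HasDerivAt (fun θ => ψ θ x) (ψd x) θ0)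
    (hphase : inn (ψ θ0) ψd = 0)
    (F : ℝ) (hF : F = 4 * nsq ψd)
    -- first-stage rank-one projective measurement on H_o
    (eo : Fin dOut → Fin dOut → ℂ)
    (honb : ∀ i i', inn (eo i) (eo i') = if i = i' then 1 else 0)
    -- (1 ⊗ P_i) ψ_θ
    (condVec : ℝ → Fin dOut → (Fin ds × Fin dOut) → ℂ)
    (hcond : ∀ θ i, condVec θ i =
      fun x => eo i x.2 * ∑ v, conj (eo i v) * ψ θ (x.1, v))
    -- the outcome distribution and its derivative
    (p : ℝ → Fin dOut → ℝ) (hp : ∀ θ i, p θ i = nsq (condVec θ i))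
    (pd : Fin dOut → ℝ) (hpd : ∀ i, HasDerivAt (fun θ => p θ i) (pd i) θ0)
    -- classical Fisher information of the first stage
    (IX : ℝ)
    (hIX : IX = ∑ i ∈ Finset.univ.filter (fun i : Fin dOut => p θ0 i ≠ 0),
      (p θ0 i)⁻¹ * (pd i) ^ 2)
    -- normalized conditional post-measurement states and their derivatives
    (ψc : ℝ → Fin dOut → (Fin ds × Fin dOut) → ℂ)
    (hψc : ∀ θ i, ψc θ i = fun x => condVec θ i x / Real.sqrt (p θ i))
    (ψdc : Fin dOut → (Fin ds × Fin dOut) → ℂ)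
    (hψdc : ∀ i, p θ0 i ≠ 0 →
      ∀ x, HasDerivAt (fun θ => ψc θ i x) (ψdc i x) θ0)
    -- quantum Fisher information of the conditional pure-state models
    (Fc : Fin dOut → ℝ)
    (hFc : ∀ i, p θ0 i ≠ 0 →
      Fc i = 4 * (nsq (ψdc i) - Complex.normSq (inn (ψc θ0 i) (ψdc i))))
    -- second-stage rank-one projective measurements on H_s, one for each outcome i
    (es : Fin dOut → Fin ds → Fin ds → ℂ)
    (honbs : ∀ i y y', inn (es i y) (es i y') = if y = y' then 1 else 0)
    -- conditional second-stage outcome distributions and their derivatives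
    (q : ℝ → Fin dOut → Fin ds → ℝ)
    (hq : ∀ θ i y, q θ i y =
      ∑ u, Complex.normSq (∑ s, conj (es i y s) * ψc θ i (s, u)))
    (qd : Fin dOut → Fin ds → ℝ)
    (hqd : ∀ i, p θ0 i ≠ 0 →
      ∀ y, HasDerivAt (fun θ => q θ i y) (qd i y) θ0)
    -- conditional classical Fisher information of the second stage
    (IYX : Fin dOut → ℝ)
    (hIYX : ∀ i, p θ0 i ≠ 0 →
      IYX i = ∑ y ∈ Finset.univ.filter (fun y : Fin ds => q θ0 i y ≠ 0),
        (q θ0 i y)⁻¹ * (qd i y) ^ 2)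
    -- the two-stage measurement attains the quantum Fisher information
    (htot : IX + ∑ i, p θ0 i * IYX i = F) :
    F - IX = ∑ i, p θ0 i * Fc i := by
  classical
  -- derivative of the unnormalized conditional vectors
  set φd : Fin dOut → (Fin ds × Fin dOut) → ℂ :=
    fun i x => eo i x.2 * ∑ v, conj (eo i v) * ψd (x.1, v) with hφddef
  have hφd : ∀ i x, HasDerivAt (fun θ => condVec θ i x) (φd i x) θ0 := by
    intro i x
    have hfun : (fun θ => condVec θ i x)
        = fun θ => eo i x.2 * ∑ v, conj (eo i v) * ψ θ (x.1, v) := by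
      funext θ; rw [hcond]
    rw [hfun, hφddef]
    exact (HasDerivAt.fun_sum fun v _ => (hψd (x.1, v)).const_mul (conj (eo i v))).const_mul _
  have hPnn : ∀ i, 0 ≤ p θ0 i := fun i => by rw [hp]; exact RII.nsq_nonneg _
  have hpd' : ∀ i, pd i = 2 * (inn (condVec θ0 i) (φd i)).re := by
    intro i
    have hfun : (fun θ => p θ i) = fun θ => ∑ x, Complex.normSq (condVec θ i x) := by
      funext θ; rw [hp]; rfl
    have h1 : HasDerivAt (fun θ => p θ i)
        (∑ x, 2 * (conj (condVec θ0 i x) * φd i x).re) θ0 := by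
      rw [hfun]; exact HasDerivAt.fun_sum fun x _ => RII.hder_normSq (hφd i x)
    rw [(hpd i).unique h1, inn, Complex.re_sum, Finset.mul_sum]
  have hsum_nsq_phid : ∑ i, nsq (φd i) = nsq ψd := by
    have key := RII.sum_inn_phi eo honb ψd ψd
    have h2 : ((∑ i, nsq (φd i) : ℝ) : ℂ) = ((nsq ψd : ℝ) : ℂ) := by
      push_cast
      calc (∑ i, ((nsq (φd i) : ℝ) : ℂ)) = ∑ i, inn (φd i) (φd i) := by
            exact Finset.sum_congr rfl fun i _ => (RII.inn_self _).symm
        _ = inn ψd ψd := by rw [hφddef]; exact key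
        _ = ((nsq ψd : ℝ) : ℂ) := RII.inn_self _
    exact_mod_cast h2
  -- main per-outcome estimates
  have hmain : ∀ i, p θ0 i ≠ 0 →
      (p θ0 i * Fc i ≤ 4 * nsq (φd i) - (p θ0 i)⁻¹ * pd i ^ 2 ∧ IYX i ≤ Fc i) := by
    intro i hi
    have hP : 0 < p θ0 i := lt_of_le_of_ne (hPnn i) (Ne.symm hi)
    set P := p θ0 i with hPdef
    set sr := Real.sqrt P with hsrdef
    have hsr : 0 < sr := Real.sqrt_pos.mpr hP
    have hsr2 : sr ^ 2 = P := Real.sq_sqrt hP.le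
    have hPc : (P : ℂ) = (sr : ℂ) ^ 2 := by exact_mod_cast hsr2.symm
    set A := inn (condVec θ0 i) (φd i) with hAdef
    have hAre : A.re = pd i / 2 := by rw [hpd' i]; ring
    set c1 : ℝ := sr⁻¹ with hc1def
    set c2 : ℝ := -(pd i) / (2 * P * sr) with hc2def
    -- derivative of the normalizing factor
    have hsder : HasDerivAt (fun θ => ((Real.sqrt (p θ i) : ℝ) : ℂ))
        ((pd i / (2 * sr) : ℝ) : ℂ) θ0 := by
      have h1 : HasDerivAt (fun θ => Real.sqrt (p θ i)) (1 / (2 * sr) * pd i) θ0 :=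
        (Real.hasDerivAt_sqrt hi).comp θ0 (hpd i)
      have h2 := h1.ofReal_comp
      convert h2 using 1
      push_cast; ring
    -- explicit formula for the derivative of the conditional state
    have hform : ψdc i = fun x => (c1 : ℂ) * φd i x + (c2 : ℂ) * condVec θ0 i x := by
      funext x
      have hdiv : HasDerivAt (fun θ => condVec θ i x / ((Real.sqrt (p θ i) : ℝ) : ℂ))
          ((φd i x * ((Real.sqrt (p θ0 i) : ℝ) : ℂ)
            - condVec θ0 i x * ((pd i / (2 * sr) : ℝ) : ℂ))
              / ((Real.sqrt (p θ0 i) : ℝ) : ℂ) ^ 2) θ0 :=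
        (hφd i x).div hsder (by exact_mod_cast hsr.ne')
    -- identify with ψdc
      have hfun : (fun θ => ψc θ i x)
          = fun θ => condVec θ i x / ((Real.sqrt (p θ i) : ℝ) : ℂ) := by
        funext θ; rw [hψc]
      have huniq := (hψdc i hi x).unique (by rw [hfun]; exact hdiv)
      rw [huniq, hc1def, hc2def]
      have hsrne : (sr : ℂ) ≠ 0 := by exact_mod_cast hsr.ne'
      rw [← hsrdef]
      push_cast
      rw [hPc]
      field_simp [hsrne]
      ring
    have hψc0 : ψc θ0 i = fun x => (c1 : ℂ) * condVec θ0 i x := by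
      funext x
      simp only [hψc, hc1def, hsrdef]
      rw [div_eq_mul_inv, mul_comm (condVec θ0 i x) _, Complex.ofReal_inv, hPdef]
    have hnsq0 : nsq (condVec θ0 i) = P := (hp θ0 i).symm
    have hinnA : inn (ψc θ0 i) (ψdc i) = (c1 : ℂ) * ((c1 : ℂ) * A + (c2 : ℂ) * (P : ℂ)) := by
      rw [hψc0, hform, RII.inn_smul_left_real, RII.inn_comb_right, hAdef,
        RII.inn_self, hnsq0]
    have hsrne : (sr : ℂ) ≠ 0 := by exact_mod_cast hsr.ne'
    have hinn : inn (ψc θ0 i) (ψdc i) = Complex.I * ((A.im / P : ℝ) : ℂ) := by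
      rw [hinnA]
      apply Complex.ext
      · simp only [Complex.mul_re, Complex.add_re, Complex.add_im, Complex.mul_im,
          Complex.ofReal_re, Complex.ofReal_im, Complex.I_re, Complex.I_im]
        rw [hAre, hc1def, hc2def, ← hsr2]
        field_simp
        ring
      · simp only [Complex.mul_re, Complex.add_re, Complex.add_im, Complex.mul_im,
          Complex.ofReal_re, Complex.ofReal_im, Complex.I_re, Complex.I_im]
        rw [hc1def, hc2def, ← hsr2]
        field_simp
        ring
    have hrev : (inn (φd i) (condVec θ0 i)).re = pd i / 2 := by
      rw [RII.inn_conj, Complex.conj_re, ← hAdef, hAre]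
    have hnsqdc : nsq (ψdc i) = nsq (φd i) / P - (pd i) ^ 2 / (4 * P ^ 2) := by
      rw [hform, RII.nsq_comb, hnsq0, hrev, hc1def, hc2def, ← hsr2]
      field_simp
      ring
    have hnormSqinn : Complex.normSq (inn (ψc θ0 i) (ψdc i)) = (A.im / P) ^ 2 := by
      rw [hinn]
      simp [Complex.normSq_mul, Complex.normSq_ofReal, sq]
      ring
    constructor
    · -- first estimate
      have h1 : P * Fc i = 4 * nsq (φd i) - P⁻¹ * (pd i) ^ 2 - 4 * (A.im) ^ 2 / P := by
        rw [hFc i hi, hnsqdc, hnormSqinn]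
        field_simp
      have h2 : 0 ≤ 4 * (A.im) ^ 2 / P := by positivity
      linarith
    · -- Braunstein–Caves for the conditional model
      set t : ℝ := A.im / P with htdef
      set g : (Fin ds × Fin dOut) → ℂ :=
        fun x => ψdc i x + (-(Complex.I * (t : ℂ))) * ψc θ0 i x with hgdef
      have hnψc : nsq (ψc θ0 i) = 1 := by
        rw [hψc0, RII.nsq_smul_real, hnsq0, hc1def, ← hsr2]
        field_simp
      have hinnrev : inn (ψdc i) (ψc θ0 i) = -(Complex.I * (t : ℝ)) := by
        rw [RII.inn_conj, hinn]
        simp [map_mul, Complex.conj_ofReal, Complex.conj_I]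
      have hng : nsq g = nsq (ψdc i) - t ^ 2 := by
        rw [hgdef, RII.nsq_add_smul, hinnrev, hnψc]
        simp [Complex.normSq_mul, Complex.normSq_ofReal, Complex.normSq_I,
          Complex.mul_re, Complex.I_re, Complex.I_im, Complex.ofReal_re, Complex.ofReal_im]
        ring
      set a : Fin ds → Fin dOut → ℂ :=
        fun y u => ∑ sx, conj (es i y sx) * ψc θ0 i (sx, u) with hadef
      set ad : Fin ds → Fin dOut → ℂ :=
        fun y u => ∑ sx, conj (es i y sx) * ψdc i (sx, u) with haddef
      set b : Fin ds → Fin dOut → ℂ :=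
        fun y u => ∑ sx, conj (es i y sx) * g (sx, u) with hbdef
      have hq0 : ∀ y, q θ0 i y = ∑ u, Complex.normSq (a y u) := by
        intro y; rw [hq, hadef]
      have hqnn : ∀ y, 0 ≤ q θ0 i y := by
        intro y; rw [hq0]
        exact Finset.sum_nonneg fun _ _ => Complex.normSq_nonneg _
      have hqd' : ∀ y, qd i y = 2 * ∑ u, (conj (a y u) * ad y u).re := by
        intro y
        have h1 : ∀ u, HasDerivAt (fun θ => ∑ sx, conj (es i y sx) * ψc θ i (sx, u))
            (ad y u) θ0 := by
          intro u; rw [haddef]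
          exact HasDerivAt.fun_sum fun sx _ => (hψdc i hi (sx, u)).const_mul _
        have h2 : HasDerivAt (fun θ => q θ i y)
            (∑ u, 2 * (conj (a y u) * ad y u).re) θ0 := by
          have hfun : (fun θ => q θ i y)
              = fun θ => ∑ u, Complex.normSq (∑ sx, conj (es i y sx) * ψc θ i (sx, u)) := by
            funext θ; rw [hq]
          rw [hfun]
          have := fun u (_ : u ∈ Finset.univ) => RII.hder_normSq (h1 u)
          convert HasDerivAt.fun_sum this using 2
        rw [(hqd i hi y).unique h2, Finset.mul_sum]
      have hbval : ∀ y u, b y u = ad y u - Complex.I * (t : ℂ) * a y u := by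
        intro y u
        simp only [hbdef, haddef, hadef]
        have h1 : ∀ sx, conj (es i y sx) * g (sx, u)
            = conj (es i y sx) * ψdc i (sx, u)
              - Complex.I * (t : ℂ) * (conj (es i y sx) * ψc θ0 i (sx, u)) := by
          intro sx; simp only [hgdef]; ring
        rw [Finset.sum_congr rfl fun sx _ => h1 sx, Finset.sum_sub_distrib, ← Finset.mul_sum]
      have hre : ∀ y u, (conj (a y u) * b y u).re = (conj (a y u) * ad y u).re := by
        intro y u
        rw [hbval]
        have h1 : conj (a y u) * (ad y u - Complex.I * (t : ℂ) * a y u)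
            = conj (a y u) * ad y u
              - Complex.I * (t : ℂ) * ((Complex.normSq (a y u) : ℝ) : ℂ) := by
          rw [Complex.normSq_eq_conj_mul_self]
          ring
        rw [h1]
        simp [Complex.sub_re, Complex.mul_re, Complex.I_re, Complex.I_im,
          Complex.ofReal_re, Complex.ofReal_im]
      have hy : ∀ y, q θ0 i y ≠ 0 →
          (q θ0 i y)⁻¹ * (qd i y) ^ 2 ≤ 4 * ∑ u, Complex.normSq (b y u) := by
        intro y hy0
        have hqpos : 0 < q θ0 i y := lt_of_le_of_ne (hqnn y) (Ne.symm hy0)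
        have hcs : (∑ u, (conj (a y u) * b y u).re) ^ 2
            ≤ (∑ u, Complex.normSq (a y u)) * (∑ u, Complex.normSq (b y u)) :=
          RII.cs_re (a y) (b y)
        have hqd2 : (qd i y) ^ 2 = 4 * (∑ u, (conj (a y u) * b y u).re) ^ 2 := by
          rw [hqd']
          rw [Finset.sum_congr rfl fun u _ => (hre y u)]
          ring
        have hqa : 0 < ∑ u, Complex.normSq (a y u) := by rw [← hq0]; exact hqpos
        rw [hqd2, hq0 y, inv_mul_le_iff₀ hqa]
        calc 4 * (∑ u, (conj (a y u) * b y u).re) ^ 2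
            ≤ 4 * ((∑ u, Complex.normSq (a y u)) * (∑ u, Complex.normSq (b y u))) := by
              linarith
          _ = (∑ u, Complex.normSq (a y u)) * (4 * ∑ u, Complex.normSq (b y u)) := by ring
      have hsumb : ∑ y, ∑ u, Complex.normSq (b y u) = nsq g := by
        rw [Finset.sum_comm]
        have h1 : ∀ u, ∑ y, Complex.normSq (b y u) = ∑ sx, Complex.normSq (g (sx, u)) := by
          intro u
          have := RII.onb_parseval_nsq (es i) (honbs i) (fun sx => g (sx, u))
          simpa [hbdef] using this
        rw [Finset.sum_congr rfl fun u (_ : u ∈ Finset.univ) => h1 u]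
        rw [nsq, Fintype.sum_prod_type]
        exact Finset.sum_comm
      have hFcval : Fc i = 4 * (nsq (ψdc i) - t ^ 2) := by
        rw [hFc i hi, hnormSqinn]
      rw [hIYX i hi, hFcval, ← hng]
      calc ∑ y ∈ Finset.univ.filter (fun y : Fin ds => q θ0 i y ≠ 0),
            (q θ0 i y)⁻¹ * (qd i y) ^ 2
          ≤ ∑ y ∈ Finset.univ.filter (fun y : Fin ds => q θ0 i y ≠ 0),
            4 * ∑ u, Complex.normSq (b y u) :=
            Finset.sum_le_sum fun y hy' => hy y (Finset.mem_filter.mp hy').2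
        _ ≤ ∑ y, 4 * ∑ u, Complex.normSq (b y u) :=
            Finset.sum_le_sum_of_subset_of_nonneg (Finset.filter_subset _ _)
              (fun y _ _ => mul_nonneg (by norm_num)
                (Finset.sum_nonneg fun u _ => Complex.normSq_nonneg _))
        _ = 4 * nsq g := by rw [← hsumb, Finset.mul_sum]
  -- assembly
  have h1 : ∑ i, p θ0 i * Fc i
      = ∑ i ∈ Finset.univ.filter (fun i : Fin dOut => p θ0 i ≠ 0), p θ0 i * Fc i := by
    symm
    exact Finset.sum_filter_of_ne fun i _ hne => fun h0 => hne (by rw [h0, zero_mul])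
  have h2 : ∑ i ∈ Finset.univ.filter (fun i : Fin dOut => p θ0 i ≠ 0), p θ0 i * Fc i
      ≤ ∑ i ∈ Finset.univ.filter (fun i : Fin dOut => p θ0 i ≠ 0),
          (4 * nsq (φd i) - (p θ0 i)⁻¹ * pd i ^ 2) :=
    Finset.sum_le_sum fun i hiK => (hmain i (Finset.mem_filter.mp hiK).2).1
  have h3 : ∑ i ∈ Finset.univ.filter (fun i : Fin dOut => p θ0 i ≠ 0),
        (4 * nsq (φd i) - (p θ0 i)⁻¹ * pd i ^ 2)
      = (∑ i ∈ Finset.univ.filter (fun i : Fin dOut => p θ0 i ≠ 0), 4 * nsq (φd i)) - IX := by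
    rw [hIX, Finset.sum_sub_distrib]
  have h4 : ∑ i ∈ Finset.univ.filter (fun i : Fin dOut => p θ0 i ≠ 0), 4 * nsq (φd i)
      ≤ ∑ i, 4 * nsq (φd i) :=
    Finset.sum_le_sum_of_subset_of_nonneg (Finset.filter_subset _ _)
      (fun i _ _ => mul_nonneg (by norm_num) (RII.nsq_nonneg _))
  have h5 : ∑ i : Fin dOut, 4 * nsq (φd i) = F := by
    rw [hF, ← hsum_nsq_phid, Finset.mul_sum]
  have h6 : ∑ i, p θ0 i * IYX i ≤ ∑ i, p θ0 i * Fc i := by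
    refine Finset.sum_le_sum fun i _ => ?_
    by_cases hi : p θ0 i = 0
    · rw [hi]; simp
    · exact mul_le_mul_of_nonneg_left (hmain i hi).2 (hPnn i)
  linarith

end
end

section
/- Let {W_θ} be a differentiable family of unitaries on ℂ^D ⊗ ℂ^k, with W = W_{θ0}, Ẇ = (d/dθ)W_θ|_{θ0}, and unit vectors ψ ∈ ℂ^D, χ ∈ ℂ^k satisfying W(ψ⊗χ) = ψ⊗χ and ⟨ψ⊗χ| W*Ẇ |ψ⊗χ⟩ = 0. For n ≥ 1 set Ψ_θ(n) = W_θ^(n)···W_θ^(1)(ψ⊗χ^⊗n) and M^(n) = |Ψ_{θ0}(n)⟩⟨Ψ̇_{θ0}(n)| − |Ψ̇_{θ0}(n)⟩⟨Ψ_{θ0}(n)|. Fix 1 ≤ j ≤ n, and for each l < j let {e^[l]_i}_{i=1}^k be an orthonormal basis of ℂ^k with |⟨e^[l]_i, χ⟩|² = 1/k for all i (each basis possibly depending on the previous outcomes i_1,…,i_{l−1}). Then for any outcome record (i_1,…,i_{j−1}), the operator on the j-th noise unit obtained by first contracting M^(n) with |e^[1]_{i_1}⟩⊗···⊗|e^[j−1]_{i_{j−1}}⟩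 on units 1,…,j−1 and then taking the partial trace over the system ℂ^D and units j+1,…,n coincides with the corresponding operator computed from M^(j) (the same construction with output length j): M^(n)_j(i_1,…,i_{j−1}) = M^(j)_j(i_1,…,i_{j−1}). -/
open scoped BigOperators Matrix Kronecker ComplexConjugate Classical
open Matrix

noncomputable section

/-- `M = |v⟩⟨w| - |w⟩⟨v|`. -/
def mmat {α : Type*} (v w : α → ℂ) : Matrix α α ℂ := outer v w - outer w v

/-- Contraction of an operator `A` on `ℂ^D ⊗ (ℂ^k)^⊗n` with the vectors `w 0, …, w (m-1)`
on the first `m` noise units, followed by the partial trace over the system and over the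
noise units `m+1, …, n-1`; the result is an operator on the `m`-th noise unit `ℂ^k`. -/
def ctrNoise {D k : ℕ} (n m : ℕ) (hm : m < n)
    (A : Matrix (Fin D × (Fin n → Fin k)) (Fin D × (Fin n → Fin k)) ℂ)
    (w : ℕ → Fin k → ℂ) : Matrix (Fin k) (Fin k) ℂ :=
  fun u v => ∑ s : Fin D, ∑ g : Fin n → Fin k, ∑ g' : Fin n → Fin k,
    if g ⟨m, hm⟩ = u ∧ g' ⟨m, hm⟩ = v ∧ (∀ l : Fin n, m < (l : ℕ) → g l = g' l) then
      (∏ l : Fin n, if (l : ℕ) < m then conj (w (l : ℕ) (g l)) * w (l : ℕ) (g' l) else 1)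
        * A (s, g) (s, g')
    else 0

set_option linter.unusedSectionVars false
set_option linter.unusedVariables false
set_option maxHeartbeats 1000000
namespace FilterAux

variable {α ι : Type*} [Fintype α] [Fintype ι] [DecidableEq α] [DecidableEq ι]

lemma sum_snoc {n : ℕ} (F : (Fin (n+1) → ι) → ℂ) :
    ∑ g : Fin (n+1) → ι, F g = ∑ g0 : Fin n → ι, ∑ i : ι, F (Fin.snoc g0 i) := by
  rw [← (Fin.snocEquiv (fun _ => ι)).sum_comp F]
  rw [Fintype.sum_prod_type]
  rw [Finset.sum_comm]
  rfl

lemma forall_castSucc {n : ℕ} {P : Fin (n+1) → Prop} :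
    (∀ l, P l) ↔ (∀ l : Fin n, P l.castSucc) ∧ P (Fin.last n) :=
  ⟨fun h => ⟨fun l => h _, h _⟩, fun h l => Fin.lastCases h.2 h.1 l⟩

lemma init_eq_iff {n : ℕ} {g h : Fin (n+1) → ι} :
    (∀ l, l ≠ Fin.last n → g l = h l) ↔ Fin.init g = Fin.init h := by
  constructor
  · intro H
    funext l
    exact H _ (Fin.castSucc_lt_last l).ne
  · intro H l hl
    obtain ⟨l', rfl⟩ := Fin.exists_castSucc_eq.mpr hl
    exact congrFun H l'

lemma eq_iff_init_last {n : ℕ} {g h : Fin (n+1) → ι} :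
    g = h ↔ Fin.init g = Fin.init h ∧ g (Fin.last n) = h (Fin.last n) := by
  constructor
  · rintro rfl; exact ⟨rfl, rfl⟩
  · rintro ⟨h1, h2⟩
    funext l
    refine Fin.lastCases h2 (fun l' => ?_) l
    exact congrFun h1 l'

/-- extension of a matrix by identity on an extra last unit -/
def ext1 (n : ℕ) (A : Matrix (α × (Fin n → ι)) (α × (Fin n → ι)) ℂ) :
    Matrix (α × (Fin (n+1) → ι)) (α × (Fin (n+1) → ι)) ℂ :=
  fun p q => if p.2 (Fin.last n) = q.2 (Fin.last n) then
    A (p.1, Fin.init p.2) (q.1, Fin.init q.2) else 0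

lemma ext1_one (n : ℕ) : ext1 (α := α) (ι := ι) n 1 = 1 := by
  ext ⟨s, g⟩ ⟨t, h⟩
  simp only [ext1, Matrix.one_apply, Prod.mk.injEq, eq_iff_init_last (g := g) (h := h)]
  by_cases h1 : g (Fin.last n) = h (Fin.last n) <;>
    by_cases h2 : s = t <;>
    by_cases h3 : Fin.init g = Fin.init h <;>
    simp [h1, h2, h3]

lemma ext1_mul (n : ℕ) (A B : Matrix (α × (Fin n → ι)) (α × (Fin n → ι)) ℂ) :
    ext1 n (A * B) = ext1 n A * ext1 n B := by
  ext ⟨s, g⟩ ⟨t, h⟩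
  have hRHS : (ext1 n A * ext1 n B) (s, g) (t, h)
      = ∑ u : α, ∑ h0 : Fin n → ι,
          A (s, Fin.init g) (u, h0) *
            (if g (Fin.last n) = h (Fin.last n) then B (u, h0) (t, Fin.init h) else 0) := by
    rw [Matrix.mul_apply, Fintype.sum_prod_type]
    refine Finset.sum_congr rfl fun u _ => ?_
    rw [sum_snoc (fun x => ext1 n A (s, g) (u, x) * ext1 n B (u, x) (t, h))]
    refine Finset.sum_congr rfl fun h0 _ => ?_
    simp only [ext1, Fin.snoc_last, Fin.init_snoc, ite_mul, zero_mul]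
    rw [Finset.sum_ite_eq Finset.univ (g (Fin.last n))
      (fun i => A (s, Fin.init g) (u, h0) *
        if i = h (Fin.last n) then B (u, h0) (t, Fin.init h) else 0)]
    simp
  rw [hRHS]
  simp only [ext1]
  by_cases hgl : g (Fin.last n) = h (Fin.last n)
  · simp only [hgl, if_true, Matrix.mul_apply, Fintype.sum_prod_type]
  · simp [hgl]

/-- `ext1` as a monoid hom. -/
def ext1Hom (n : ℕ) : Matrix (α × (Fin n → ι)) (α × (Fin n → ι)) ℂ →*
    Matrix (α × (Fin (n+1) → ι)) (α × (Fin (n+1) → ι)) ℂ where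
  toFun := ext1 n
  map_one' := ext1_one n
  map_mul' := ext1_mul n

set_option linter.unusedSectionVars false
set_option linter.unusedVariables false

lemma amp_castSucc (n : ℕ) (W : Matrix (α × ι) (α × ι) ℂ) (j : Fin n) :
    amp (n+1) W j.castSucc = ext1 n (amp n W j) := by
  ext ⟨s, g⟩ ⟨t, h⟩
  simp only [amp, ext1]
  have hcond : (∀ l : Fin (n+1), l ≠ j.castSucc → g l = h l) ↔
      (g (Fin.last n) = h (Fin.last n) ∧
        ∀ l' : Fin n, l' ≠ j → Fin.init g l' = Fin.init h l') := by
    constructor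
    · intro H
      exact ⟨H _ (Fin.castSucc_lt_last j).ne',
        fun l' hl' => H _ (fun hc => hl' (Fin.castSucc_injective n hc))⟩
    · rintro ⟨h1, h2⟩ l
      refine Fin.lastCases (fun _ => h1) (fun l' hl => h2 l' (fun he => hl (by rw [he]))) l
  by_cases hc : ∀ l : Fin (n+1), l ≠ j.castSucc → g l = h l
  · obtain ⟨h1, h2⟩ := hcond.mp hc
    rw [if_pos hc, if_pos h1, if_pos h2]
    rfl
  · rw [if_neg hc]
    by_cases h1 : g (Fin.last n) = h (Fin.last n)
    · rw [if_pos h1, if_neg (fun h2 => hc (hcond.mpr ⟨h1, h2⟩))]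
    · rw [if_neg h1]

lemma steps_succ (n : ℕ) (W : Matrix (α × ι) (α × ι) ℂ) :
    steps (n+1) W = amp (n+1) W (Fin.last n) * ext1 n (steps n W) := by
  unfold steps
  rw [List.ofFn_succ']
  rw [List.concat_eq_append, List.reverse_append, List.reverse_singleton,
    List.singleton_append, List.prod_cons]
  congr 1
  have h1 : (List.ofFn fun j : Fin n => amp (n+1) W j.castSucc)
      = (List.ofFn fun j : Fin n => amp n W j).map (ext1Hom n) := by
    rw [List.map_ofFn]
    exact congrArg List.ofFn (funext fun j => amp_castSucc n W j)
  rw [h1, ← List.map_reverse, List.prod_hom]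
  rfl

lemma vpow_snoc {n : ℕ} (χ : ι → ℂ) (g : Fin n → ι) (i : ι) :
    vpow (n+1) χ (Fin.snoc g i) = vpow n χ g * χ i := by
  simp [vpow, Fin.prod_univ_castSucc]

lemma vpow_init_last {n : ℕ} (χ : ι → ℂ) (g : Fin (n+1) → ι) :
    vpow (n+1) χ g = vpow n χ (Fin.init g) * χ (g (Fin.last n)) := by
  simp [vpow, Fin.prod_univ_castSucc, Fin.init]

lemma ext1_mulVec (n : ℕ) (A : Matrix (α × (Fin n → ι)) (α × (Fin n → ι)) ℂ)
    (ψ : α → ℂ) (χ : ι → ℂ) (t : α) (h : Fin (n+1) → ι) :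
    (ext1 n A).mulVec (vtens ψ (vpow (n+1) χ)) (t, h)
      = χ (h (Fin.last n)) * A.mulVec (vtens ψ (vpow n χ)) (t, Fin.init h) := by
  simp only [Matrix.mulVec, dotProduct]
  rw [Fintype.sum_prod_type (f := fun x : α × (Fin (n+1) → ι) =>
      ext1 n A (t, h) x * vtens ψ (vpow (n+1) χ) x),
    Fintype.sum_prod_type (f := fun x : α × (Fin n → ι) =>
      A (t, Fin.init h) x * vtens ψ (vpow n χ) x),
    Finset.mul_sum]
  refine Finset.sum_congr rfl fun u _ => ?_
  rw [sum_snoc (fun h' => ext1 n A (t, h) (u, h') * vtens ψ (vpow (n+1) χ) (u, h'))]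
  simp only [ext1, Fin.snoc_last, Fin.init_snoc, ite_mul, zero_mul, vtens, vpow_snoc]
  rw [Finset.sum_congr rfl (fun h0 _ => Finset.sum_ite_eq Finset.univ (h (Fin.last n))
    (fun i => A (t, Fin.init h) (u, h0) * (ψ u * (vpow n χ h0 * χ i))))]
  simp only [Finset.mem_univ, if_true, Finset.mul_sum]
  exact Finset.sum_congr rfl fun h0 _ => by ring

lemma amp_last_mulVec (n : ℕ) (W : Matrix (α × ι) (α × ι) ℂ)
    (v : α × (Fin (n+1) → ι) → ℂ) (s : α) (g : Fin (n+1) → ι) :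
    (amp (n+1) W (Fin.last n)).mulVec v (s, g)
      = ∑ t : α, ∑ i : ι, W (s, g (Fin.last n)) (t, i) * v (t, Fin.snoc (Fin.init g) i) := by
  simp only [Matrix.mulVec, dotProduct]
  rw [Fintype.sum_prod_type]
  refine Finset.sum_congr rfl fun t _ => ?_
  rw [sum_snoc (fun h' => amp (n+1) W (Fin.last n) (s, g) (t, h') * v (t, h'))]
  simp only [amp, ite_mul, zero_mul, Fin.snoc_last]
  have hcond : ∀ h0 : Fin n → ι, ∀ i : ι,
      (∀ l : Fin (n+1), l ≠ Fin.last n → g l = (Fin.snoc h0 i : Fin (n+1) → ι) l) ↔ Fin.init g = h0 := by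
    intro h0 i
    rw [init_eq_iff, Fin.init_snoc]
  rw [Finset.sum_comm]
  refine Finset.sum_congr rfl fun i _ => ?_
  rw [Finset.sum_congr rfl (fun h0 _ => by rw [if_congr (hcond h0 i) rfl rfl])]
  rw [Finset.sum_ite_eq Finset.univ (Fin.init g)
    (fun h0 => W (s, g (Fin.last n)) (t, i) * v (t, Fin.snoc h0 i))]
  simp

lemma steps_mulVec_succ (n : ℕ) (W : Matrix (α × ι) (α × ι) ℂ)
    (ψ : α → ℂ) (χ : ι → ℂ) (s : α) (g : Fin (n+1) → ι) :
    (steps (n+1) W).mulVec (vtens ψ (vpow (n+1) χ)) (s, g)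
      = ∑ t : α, ∑ i : ι, W (s, g (Fin.last n)) (t, i) * χ i *
          (steps n W).mulVec (vtens ψ (vpow n χ)) (t, Fin.init g) := by
  rw [steps_succ, ← Matrix.mulVec_mulVec]
  rw [amp_last_mulVec]
  refine Finset.sum_congr rfl fun t _ => Finset.sum_congr rfl fun i _ => ?_
  rw [ext1_mulVec]
  rw [Fin.snoc_last, Fin.init_snoc]
  ring

lemma steps_zero (W : Matrix (α × ι) (α × ι) ℂ) : steps 0 W = 1 := by
  simp [steps]

lemma steps_fix (W0 : Matrix (α × ι) (α × ι) ℂ) (ψ : α → ℂ) (χ : ι → ℂ)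
    (hst : W0.mulVec (vtens ψ χ) = vtens ψ χ) :
    ∀ n, (steps n W0).mulVec (vtens ψ (vpow n χ)) = vtens ψ (vpow n χ) := by
  intro n
  induction n with
  | zero => rw [steps_zero, Matrix.one_mulVec]
  | succ n ih =>
    funext p
    obtain ⟨s, g⟩ := p
    rw [steps_mulVec_succ, ih]
    have hmv : ∀ x : ι, (W0.mulVec (vtens ψ χ)) (s, x)
        = ∑ t : α, ∑ i : ι, W0 (s, x) (t, i) * (ψ t * χ i) := by
      intro x
      simp only [Matrix.mulVec, dotProduct, vtens]
      rw [Fintype.sum_prod_type]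
    calc ∑ t, ∑ i, W0 (s, g (Fin.last n)) (t, i) * χ i * vtens ψ (vpow n χ) (t, Fin.init g)
        = (∑ t, ∑ i, W0 (s, g (Fin.last n)) (t, i) * (ψ t * χ i)) * vpow n χ (Fin.init g) := by
          rw [Finset.sum_mul]
          refine Finset.sum_congr rfl fun t _ => ?_
          rw [Finset.sum_mul]
          refine Finset.sum_congr rfl fun i _ => ?_
          simp only [vtens]
          ring
      _ = vtens ψ χ (s, g (Fin.last n)) * vpow n χ (Fin.init g) := by rw [← hmv, hst]
      _ = vtens ψ (vpow (n+1) χ) (s, g) := by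
          simp only [vtens, vpow_init_last]
          ring

/-- `p ↦ a(sys, last unit) * c(init units)` -/
def liftLast {α ι : Type*} (N : ℕ) (a : α × ι → ℂ) (c : (Fin N → ι) → ℂ) :
    α × (Fin (N+1) → ι) → ℂ := fun p => a (p.1, p.2 (Fin.last N)) * c (Fin.init p.2)

/-- apply `W0` on system ⊗ last unit to `f ⊗ χ` -/
def Uapp {α ι : Type*} [Fintype α] [Fintype ι] (N : ℕ) (W0 : Matrix (α × ι) (α × ι) ℂ)
    (χ : ι → ℂ) (f : α × (Fin N → ι) → ℂ) : α × (Fin (N+1) → ι) → ℂ :=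
  fun p => ∑ t, ∑ i, W0 (p.1, p.2 (Fin.last N)) (t, i) * χ i * f (t, Fin.init p.2)

lemma u_liftLast (N : ℕ) (ψ : α → ℂ) (χ : ι → ℂ) :
    vtens ψ (vpow (N+1) χ) = liftLast N (vtens ψ χ) (vpow N χ) := by
  funext p
  simp only [liftLast, vtens, vpow_init_last]
  ring

lemma u_Uapp (N : ℕ) (W0 : Matrix (α × ι) (α × ι) ℂ) (ψ : α → ℂ) (χ : ι → ℂ)
    (hst : W0.mulVec (vtens ψ χ) = vtens ψ χ) :
    vtens ψ (vpow (N+1) χ) = Uapp N W0 χ (vtens ψ (vpow N χ)) := by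
  funext p
  obtain ⟨s, g⟩ := p
  have hmv : (W0.mulVec (vtens ψ χ)) (s, g (Fin.last N))
      = ∑ t : α, ∑ i : ι, W0 (s, g (Fin.last N)) (t, i) * (ψ t * χ i) := by
    simp only [Matrix.mulVec, dotProduct, vtens]
    rw [Fintype.sum_prod_type (f := fun q : α × ι =>
      W0 (s, g (Fin.last N)) q * (ψ q.1 * χ q.2))]
  have h1 : vtens ψ (vpow (N+1) χ) (s, g)
      = vtens ψ χ (s, g (Fin.last N)) * vpow N χ (Fin.init g) := by
    simp only [vtens, vpow_init_last]; ring
  rw [h1, ← hst, hmv]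
  simp only [Uapp, Finset.sum_mul]
  refine Finset.sum_congr rfl fun t _ => Finset.sum_congr rfl fun i _ => ?_
  simp only [vtens]
  ring

lemma psid_succ_eq (θ0 : ℝ) (W : ℝ → Matrix (α × ι) (α × ι) ℂ)
    (Wd : Matrix (α × ι) (α × ι) ℂ)
    (hWd : ∀ x y, HasDerivAt (fun θ => W θ x y) (Wd x y) θ0)
    (ψ : α → ℂ) (χ : ι → ℂ)
    (hstat : (W θ0).mulVec (vtens ψ χ) = vtens ψ χ)
    (Ψ : (N : ℕ) → ℝ → (α × (Fin N → ι)) → ℂ)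
    (hΨ : ∀ N θ, Ψ N θ = (steps N (W θ)).mulVec (vtens ψ (vpow N χ)))
    (Ψd : (N : ℕ) → (α × (Fin N → ι)) → ℂ)
    (hΨd : ∀ N x, HasDerivAt (fun θ => Ψ N θ x) (Ψd N x) θ0)
    (N : ℕ) :
    Ψd (N+1) = fun p => liftLast N (Wd.mulVec (vtens ψ χ)) (vpow N χ) p
      + Uapp N (W θ0) χ (Ψd N) p := by
  have hΨ0 : ∀ M, Ψ M θ0 = vtens ψ (vpow M χ) := fun M => by
    rw [hΨ M θ0, steps_fix _ _ _ hstat]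
  funext p
  obtain ⟨s, g⟩ := p
  have hF : (fun θ => Ψ (N+1) θ (s, g))
      = fun θ => ∑ t, ∑ i, W θ (s, g (Fin.last N)) (t, i) * χ i * Ψ N θ (t, Fin.init g) := by
    funext θ
    rw [hΨ (N+1) θ, steps_mulVec_succ]
    exact Finset.sum_congr rfl fun t _ => Finset.sum_congr rfl fun i _ => by rw [hΨ N θ]
  have hDer : HasDerivAt (fun θ => Ψ (N+1) θ (s, g))
      (∑ t, ∑ i, (Wd (s, g (Fin.last N)) (t, i) * χ i * Ψ N θ0 (t, Fin.init g)
        + W θ0 (s, g (Fin.last N)) (t, i) * χ i * Ψd N (t, Fin.init g))) θ0 := by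
    rw [hF]
    refine HasDerivAt.fun_sum fun t _ => HasDerivAt.fun_sum fun i _ => ?_
    exact ((hWd (s, g (Fin.last N)) (t, i)).mul_const (χ i)).mul (hΨd N (t, Fin.init g))
  have key := (hΨd (N+1) (s, g)).unique hDer
  rw [key]
  rw [Finset.sum_congr rfl (fun t (_ : t ∈ Finset.univ) => Finset.sum_add_distrib),
    Finset.sum_add_distrib]
  refine congrArg₂ (· + ·) ?_ rfl
  rw [hΨ0 N]
  simp only [liftLast, Matrix.mulVec, dotProduct, vtens]
  rw [Fintype.sum_prod_type (f := fun q : α × ι =>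
    Wd (s, g (Fin.last N)) q * (ψ q.1 * χ q.2)), Finset.sum_mul]
  refine Finset.sum_congr rfl fun t _ => ?_
  rw [Finset.sum_mul]
  exact Finset.sum_congr rfl fun i _ => by ring

section Ctr

variable {D k : ℕ}

lemma ctrNoise_add (n m : ℕ) (hm : m < n)
    (A B : Matrix (Fin D × (Fin n → Fin k)) (Fin D × (Fin n → Fin k)) ℂ)
    (w : ℕ → Fin k → ℂ) :
    ctrNoise n m hm (A + B) w = ctrNoise n m hm A w + ctrNoise n m hm B w := by
  funext x y
  rw [Matrix.add_apply]
  unfold ctrNoise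
  rw [← Finset.sum_add_distrib]
  refine Finset.sum_congr rfl fun s _ => ?_
  rw [← Finset.sum_add_distrib]
  refine Finset.sum_congr rfl fun g _ => ?_
  rw [← Finset.sum_add_distrib]
  refine Finset.sum_congr rfl fun g' _ => ?_
  split_ifs with h
  · rw [Matrix.add_apply]; ring
  · rw [add_zero]

lemma ctrNoise_sub (n m : ℕ) (hm : m < n)
    (A B : Matrix (Fin D × (Fin n → Fin k)) (Fin D × (Fin n → Fin k)) ℂ)
    (w : ℕ → Fin k → ℂ) :
    ctrNoise n m hm (A - B) w = ctrNoise n m hm A w - ctrNoise n m hm B w := by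
  funext x y
  rw [Matrix.sub_apply]
  unfold ctrNoise
  rw [← Finset.sum_sub_distrib]
  refine Finset.sum_congr rfl fun s _ => ?_
  rw [← Finset.sum_sub_distrib]
  refine Finset.sum_congr rfl fun g _ => ?_
  rw [← Finset.sum_sub_distrib]
  refine Finset.sum_congr rfl fun g' _ => ?_
  split_ifs with h
  · rw [Matrix.sub_apply]; ring
  · rw [sub_zero]

lemma snoc_mth {ι : Type*} {N m : ℕ} (hmN : m < N) (hm1 : m < N+1)
    (g0 : Fin N → ι) (a : ι) :
    (Fin.snoc g0 a : Fin (N+1) → ι) ⟨m, hm1⟩ = g0 ⟨m, hmN⟩ := by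
  have h : (⟨m, hm1⟩ : Fin (N+1)) = Fin.castSucc ⟨m, hmN⟩ := rfl
  rw [h, Fin.snoc_castSucc]

lemma cond_snoc {ι : Type*} {N m : ℕ} (hmN : m < N) (g0 g0' : Fin N → ι) (a a' : ι) :
    (∀ l : Fin (N+1), m < (l : ℕ) →
        (Fin.snoc g0 a : Fin (N+1) → ι) l = (Fin.snoc g0' a' : Fin (N+1) → ι) l)
      ↔ (a = a' ∧ ∀ l : Fin N, m < (l : ℕ) → g0 l = g0' l) := by
  constructor
  · intro H
    constructor
    · have := H (Fin.last N) (by simpa using hmN)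
      simpa using this
    · intro l hl
      have := H l.castSucc (by simpa using hl)
      simpa using this
  · rintro ⟨rfl, H⟩ l
    refine Fin.lastCases (fun _ => by simp) (fun l' hl => ?_) l
    simp only [Fin.snoc_castSucc]
    exact H l' (by simpa using hl)

lemma prod_snoc_w {N m : ℕ} (hmN : m < N) (w : ℕ → Fin k → ℂ)
    (g0 g0' : Fin N → Fin k) (a a' : Fin k) :
    (∏ l : Fin (N+1), if (l : ℕ) < m then
        conj (w (l : ℕ) ((Fin.snoc g0 a : Fin (N+1) → Fin k) l)) *
          w (l : ℕ) ((Fin.snoc g0' a' : Fin (N+1) → Fin k) l) else 1)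
      = ∏ l : Fin N, if (l : ℕ) < m then conj (w (l : ℕ) (g0 l)) * w (l : ℕ) (g0' l) else 1 := by
  rw [Fin.prod_univ_castSucc]
  simp only [Fin.snoc_castSucc, Fin.coe_castSucc, Fin.val_last]
  rw [if_neg (by omega), mul_one]

lemma ctr_succ (N m : ℕ) (hmN : m < N) (hm1 : m < N+1)
    (V V' : Fin D → Fin k → (Fin N → Fin k) → ℂ) (w : ℕ → Fin k → ℂ) :
    ctrNoise (N+1) m hm1 (outer (fun p => V p.1 (p.2 (Fin.last N)) (Fin.init p.2))
        (fun p => V' p.1 (p.2 (Fin.last N)) (Fin.init p.2))) w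
    = fun x y => ∑ g0 : Fin N → Fin k, ∑ g0' : Fin N → Fin k,
        if g0 ⟨m, hmN⟩ = x ∧ g0' ⟨m, hmN⟩ = y ∧ (∀ l : Fin N, m < (l : ℕ) → g0 l = g0' l) then
          (∏ l : Fin N, if (l : ℕ) < m then conj (w (l : ℕ) (g0 l)) * w (l : ℕ) (g0' l) else 1)
            * ∑ s : Fin D, ∑ i : Fin k, V s i g0 * conj (V' s i g0')
        else 0 := by
  funext x y
  unfold ctrNoise outer
  have step1 : ∀ s : Fin D,
      (∑ g : Fin (N+1) → Fin k, ∑ g' : Fin (N+1) → Fin k,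
        if g ⟨m, hm1⟩ = x ∧ g' ⟨m, hm1⟩ = y ∧ (∀ l : Fin (N+1), m < (l : ℕ) → g l = g' l) then
          (∏ l : Fin (N+1), if (l : ℕ) < m then conj (w (l : ℕ) (g l)) * w (l : ℕ) (g' l) else 1)
            * (V (s, g).1 ((s, g).2 (Fin.last N)) (Fin.init (s, g).2) *
               conj (V' (s, g').1 ((s, g').2 (Fin.last N)) (Fin.init (s, g').2)))
        else 0)
      = ∑ g0 : Fin N → Fin k, ∑ i : Fin k, ∑ g0' : Fin N → Fin k,
          (if g0 ⟨m, hmN⟩ = x ∧ g0' ⟨m, hmN⟩ = y ∧ (∀ l : Fin N, m < (l : ℕ) → g0 l = g0' l) then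
            (∏ l : Fin N, if (l : ℕ) < m then conj (w (l : ℕ) (g0 l)) * w (l : ℕ) (g0' l) else 1)
              * (V s i g0 * conj (V' s i g0')) else 0) := by
    intro s
    rw [sum_snoc]
    refine Finset.sum_congr rfl fun g0 _ => Finset.sum_congr rfl fun i _ => ?_
    rw [sum_snoc]
    have hterm : ∀ (g0' : Fin N → Fin k) (i' : Fin k),
        (if (Fin.snoc g0 i : Fin (N+1) → Fin k) ⟨m, hm1⟩ = x ∧
            (Fin.snoc g0' i' : Fin (N+1) → Fin k) ⟨m, hm1⟩ = y ∧
            (∀ l : Fin (N+1), m < (l : ℕ) →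
              (Fin.snoc g0 i : Fin (N+1) → Fin k) l = (Fin.snoc g0' i' : Fin (N+1) → Fin k) l) then
          (∏ l : Fin (N+1), if (l : ℕ) < m then
              conj (w (l : ℕ) ((Fin.snoc g0 i : Fin (N+1) → Fin k) l)) *
                w (l : ℕ) ((Fin.snoc g0' i' : Fin (N+1) → Fin k) l) else 1)
            * (V s ((Fin.snoc g0 i : Fin (N+1) → Fin k) (Fin.last N)) (Fin.init (Fin.snoc g0 i : Fin (N+1) → Fin k)) *
               conj (V' s ((Fin.snoc g0' i' : Fin (N+1) → Fin k) (Fin.last N))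
                 (Fin.init (Fin.snoc g0' i' : Fin (N+1) → Fin k))))
          else 0)
        = (if i = i' then
            (if g0 ⟨m, hmN⟩ = x ∧ g0' ⟨m, hmN⟩ = y ∧ (∀ l : Fin N, m < (l : ℕ) → g0 l = g0' l) then
              (∏ l : Fin N, if (l : ℕ) < m then
                conj (w (l : ℕ) (g0 l)) * w (l : ℕ) (g0' l) else 1)
                * (V s i g0 * conj (V' s i' g0')) else 0) else 0) := by
      intro g0' i'
      simp only [snoc_mth hmN hm1, Fin.snoc_last, Fin.init_snoc, prod_snoc_w hmN,
        cond_snoc hmN]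
      by_cases hii : i = i'
      · subst hii
        rw [if_pos rfl]
        exact if_congr (by tauto) rfl rfl
      · rw [if_neg (fun h => hii h.2.2.1), if_neg hii]
    rw [Finset.sum_congr rfl fun g0' _ => Finset.sum_congr rfl fun i' _ => hterm g0' i']
    refine Finset.sum_congr rfl fun g0' _ => ?_
    rw [Finset.sum_ite_eq Finset.univ i (fun i' =>
      if g0 ⟨m, hmN⟩ = x ∧ g0' ⟨m, hmN⟩ = y ∧ (∀ l : Fin N, m < (l : ℕ) → g0 l = g0' l) then
        (∏ l : Fin N, if (l : ℕ) < m then conj (w (l : ℕ) (g0 l)) * w (l : ℕ) (g0' l) else 1)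
          * (V s i g0 * conj (V' s i' g0')) else 0)]
    simp
  rw [Finset.sum_congr rfl fun s _ => step1 s]
  rw [Finset.sum_congr rfl fun s (_ : s ∈ Finset.univ) =>
    Finset.sum_congr rfl fun g0 (_ : g0 ∈ Finset.univ) =>
      Finset.sum_comm (s := Finset.univ) (t := Finset.univ)]
  rw [Finset.sum_comm (s := Finset.univ) (t := Finset.univ)]
  refine Finset.sum_congr rfl fun g0 _ => ?_
  rw [Finset.sum_comm (s := Finset.univ) (t := Finset.univ)]
  refine Finset.sum_congr rfl fun g0' _ => ?_
  by_cases hC : g0 ⟨m, hmN⟩ = x ∧ g0' ⟨m, hmN⟩ = y ∧ (∀ l : Fin N, m < (l : ℕ) → g0 l = g0' l)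
  · simp only [if_pos hC, Finset.mul_sum]
  · simp only [if_neg hC, Finset.sum_const_zero]

end Ctr

section Claims

variable {D k : ℕ}

lemma ctr_liftLast_zero (N m : ℕ) (hmN : m < N) (hm1 : m < N+1)
    (a b : Fin D × Fin k → ℂ) (c c' : (Fin N → Fin k) → ℂ) (w : ℕ → Fin k → ℂ)
    (hab : ∑ q : Fin D × Fin k, a q * conj (b q) = 0) :
    ctrNoise (N+1) m hm1 (outer (liftLast N a c) (liftLast N b c')) w = 0 := by
  have hab' : ∑ s : Fin D, ∑ i : Fin k, a (s, i) * conj (b (s, i)) = 0 := by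
    rw [← Fintype.sum_prod_type (f := fun q : Fin D × Fin k => a q * conj (b q))]
    exact hab
  funext x y
  have h := congrFun (congrFun (ctr_succ N m hmN hm1
    (fun s i g0 => a (s, i) * c g0) (fun s i g0 => b (s, i) * c' g0) w) x) y
  refine Eq.trans (h : _) ?_
  refine Eq.trans (Finset.sum_eq_zero fun g0 _ => Finset.sum_eq_zero fun g0' _ => ?_) rfl
  have hz : ∑ s : Fin D, ∑ i : Fin k, (a (s, i) * c g0) * conj (b (s, i) * c' g0') = 0 := by
    have h1 : ∀ s : Fin D, ∀ i : Fin k,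
        (a (s, i) * c g0) * conj (b (s, i) * c' g0')
          = (a (s, i) * conj (b (s, i))) * (c g0 * conj (c' g0')) := by
      intro s i
      rw [RingHom.map_mul (starRingEnd ℂ)]
      ring
    rw [Finset.sum_congr rfl fun s (_ : s ∈ Finset.univ) =>
      Finset.sum_congr rfl fun i (_ : i ∈ Finset.univ) => h1 s i]
    rw [Finset.sum_congr rfl fun s (_ : s ∈ Finset.univ) =>
      (Finset.sum_mul Finset.univ (fun i => a (s, i) * conj (b (s, i))) _).symm]
    rw [← Finset.sum_mul, hab', zero_mul]
  rw [hz, mul_zero, ite_self]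

lemma Uapp_inner {α ι : Type*} [Fintype α] [Fintype ι] [DecidableEq α] [DecidableEq ι] {N : ℕ}
    (W0 : Matrix (α × ι) (α × ι) ℂ)
    (hu : ∀ q q' : α × ι, (∑ p : α × ι, conj (W0 p q') * W0 p q) = if q' = q then 1 else 0)
    (χ : ι → ℂ) (hχ1 : ∑ j : ι, χ j * conj (χ j) = 1)
    (f f' : α × (Fin N → ι) → ℂ) (g0 g0' : Fin N → ι) :
    ∑ s : α, ∑ i : ι,
        (∑ t, ∑ j, W0 (s, i) (t, j) * χ j * f (t, g0)) *
          conj (∑ t, ∑ j, W0 (s, i) (t, j) * χ j * f' (t, g0'))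
      = ∑ t : α, f (t, g0) * conj (f' (t, g0')) := by
  have e1 : ∀ p : α × ι, (∑ t, ∑ j, W0 p (t, j) * χ j * f (t, g0))
      = ∑ q : α × ι, W0 p q * χ q.2 * f (q.1, g0) :=
    fun p => (Fintype.sum_prod_type (f := fun q : α × ι => W0 p q * χ q.2 * f (q.1, g0))).symm
  have e1' : ∀ p : α × ι, (∑ t, ∑ j, W0 p (t, j) * χ j * f' (t, g0'))
      = ∑ q : α × ι, W0 p q * χ q.2 * f' (q.1, g0') :=
    fun p => (Fintype.sum_prod_type (f := fun q : α × ι => W0 p q * χ q.2 * f' (q.1, g0'))).symm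
  rw [← Fintype.sum_prod_type (f := fun p : α × ι =>
    (∑ t, ∑ j, W0 p (t, j) * χ j * f (t, g0)) * conj (∑ t, ∑ j, W0 p (t, j) * χ j * f' (t, g0')))]
  calc ∑ p : α × ι, (∑ t, ∑ j, W0 p (t, j) * χ j * f (t, g0)) *
          conj (∑ t, ∑ j, W0 p (t, j) * χ j * f' (t, g0'))
      = ∑ p : α × ι, ∑ q : α × ι, ∑ q' : α × ι,
          (W0 p q * χ q.2 * f (q.1, g0)) * conj (W0 p q' * χ q'.2 * f' (q'.1, g0')) := by
        refine Finset.sum_congr rfl fun p _ => ?_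
        rw [e1 p, e1' p, map_sum, Finset.sum_mul_sum]
    _ = ∑ q : α × ι, ∑ q' : α × ι, ∑ p : α × ι,
          (W0 p q * χ q.2 * f (q.1, g0)) * conj (W0 p q' * χ q'.2 * f' (q'.1, g0')) := by
        rw [Finset.sum_comm (s := Finset.univ) (t := Finset.univ)]
        refine Finset.sum_congr rfl fun q _ => ?_
        rw [Finset.sum_comm (s := Finset.univ) (t := Finset.univ)]
    _ = ∑ q : α × ι, ∑ q' : α × ι,
          (∑ p : α × ι, conj (W0 p q') * W0 p q) *
            (χ q.2 * f (q.1, g0) * (conj (χ q'.2) * conj (f' (q'.1, g0')))) := by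
        refine Finset.sum_congr rfl fun q _ => Finset.sum_congr rfl fun q' _ => ?_
        rw [Finset.sum_mul]
        refine Finset.sum_congr rfl fun p _ => ?_
        rw [RingHom.map_mul (starRingEnd ℂ), RingHom.map_mul (starRingEnd ℂ)]
        ring
    _ = ∑ q : α × ι, (χ q.2 * conj (χ q.2)) * (f (q.1, g0) * conj (f' (q.1, g0'))) := by
        refine Finset.sum_congr rfl fun q _ => ?_
        rw [Finset.sum_congr rfl fun q' (_ : q' ∈ Finset.univ) => by
          rw [hu q q', ite_mul, one_mul, zero_mul]]
        rw [Finset.sum_ite_eq' Finset.univ q (fun q' =>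
          χ q.2 * f (q.1, g0) * (conj (χ q'.2) * conj (f' (q'.1, g0'))))]
        simp only [Finset.mem_univ, if_true]
        ring
    _ = ∑ t : α, ∑ j : ι, (χ j * conj (χ j)) * (f (t, g0) * conj (f' (t, g0'))) := by
        rw [Fintype.sum_prod_type (f := fun q : α × ι =>
          (χ q.2 * conj (χ q.2)) * (f (q.1, g0) * conj (f' (q.1, g0'))))]
    _ = ∑ t : α, f (t, g0) * conj (f' (t, g0')) := by
        refine Finset.sum_congr rfl fun t _ => ?_
        rw [← Finset.sum_mul, hχ1, one_mul]

lemma ctr_Uapp (N m : ℕ) (hmN : m < N) (hm1 : m < N+1)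
    (W0 : Matrix (Fin D × Fin k) (Fin D × Fin k) ℂ)
    (hu : ∀ q q' : Fin D × Fin k,
      (∑ p : Fin D × Fin k, conj (W0 p q') * W0 p q) = if q' = q then 1 else 0)
    (χ : Fin k → ℂ) (hχ1 : ∑ j : Fin k, χ j * conj (χ j) = 1)
    (f f' : Fin D × (Fin N → Fin k) → ℂ) (w : ℕ → Fin k → ℂ) :
    ctrNoise (N+1) m hm1 (outer (Uapp N W0 χ f) (Uapp N W0 χ f')) w
      = ctrNoise N m hmN (outer f f') w := by
  funext x y
  have h := congrFun (congrFun (ctr_succ N m hmN hm1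
    (fun s i g0 => ∑ t, ∑ j, W0 (s, i) (t, j) * χ j * f (t, g0))
    (fun s i g0 => ∑ t, ∑ j, W0 (s, i) (t, j) * χ j * f' (t, g0)) w) x) y
  refine Eq.trans (h : _) ?_
  calc ∑ g0 : Fin N → Fin k, ∑ g0' : Fin N → Fin k,
        (if g0 ⟨m, hmN⟩ = x ∧ g0' ⟨m, hmN⟩ = y ∧ (∀ l : Fin N, m < (l : ℕ) → g0 l = g0' l) then
          (∏ l : Fin N, if (l : ℕ) < m then conj (w (l : ℕ) (g0 l)) * w (l : ℕ) (g0' l) else 1)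
            * ∑ s : Fin D, ∑ i : Fin k,
                (∑ t, ∑ j, W0 (s, i) (t, j) * χ j * f (t, g0)) *
                  conj (∑ t, ∑ j, W0 (s, i) (t, j) * χ j * f' (t, g0'))
        else 0)
      = ∑ g0 : Fin N → Fin k, ∑ g0' : Fin N → Fin k,
        (if g0 ⟨m, hmN⟩ = x ∧ g0' ⟨m, hmN⟩ = y ∧ (∀ l : Fin N, m < (l : ℕ) → g0 l = g0' l) then
          (∏ l : Fin N, if (l : ℕ) < m then conj (w (l : ℕ) (g0 l)) * w (l : ℕ) (g0' l) else 1)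
            * ∑ s : Fin D, f (s, g0) * conj (f' (s, g0'))
        else 0) := by
        refine Finset.sum_congr rfl fun g0 _ => Finset.sum_congr rfl fun g0' _ => ?_
        rw [Uapp_inner W0 hu χ hχ1 f f' g0 g0']
    _ = ∑ g0 : Fin N → Fin k, ∑ g0' : Fin N → Fin k, ∑ s : Fin D,
        (if g0 ⟨m, hmN⟩ = x ∧ g0' ⟨m, hmN⟩ = y ∧ (∀ l : Fin N, m < (l : ℕ) → g0 l = g0' l) then
          (∏ l : Fin N, if (l : ℕ) < m then conj (w (l : ℕ) (g0 l)) * w (l : ℕ) (g0' l) else 1)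
            * (f (s, g0) * conj (f' (s, g0')))
        else 0) := by
        refine Finset.sum_congr rfl fun g0 _ => Finset.sum_congr rfl fun g0' _ => ?_
        by_cases hC : g0 ⟨m, hmN⟩ = x ∧ g0' ⟨m, hmN⟩ = y ∧
            (∀ l : Fin N, m < (l : ℕ) → g0 l = g0' l)
        · simp only [if_pos hC, Finset.mul_sum]
        · simp only [if_neg hC, Finset.sum_const_zero]
    _ = ∑ s : Fin D, ∑ g0 : Fin N → Fin k, ∑ g0' : Fin N → Fin k,
        (if g0 ⟨m, hmN⟩ = x ∧ g0' ⟨m, hmN⟩ = y ∧ (∀ l : Fin N, m < (l : ℕ) → g0 l = g0' l) then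
          (∏ l : Fin N, if (l : ℕ) < m then conj (w (l : ℕ) (g0 l)) * w (l : ℕ) (g0' l) else 1)
            * (f (s, g0) * conj (f' (s, g0')))
        else 0) := by
        rw [Finset.sum_congr rfl fun g0 (_ : g0 ∈ Finset.univ) =>
          Finset.sum_comm (s := Finset.univ) (t := Finset.univ)]
        rw [Finset.sum_comm (s := Finset.univ) (t := Finset.univ)]
    _ = ctrNoise N m hmN (outer f f') w x y := rfl

end Claims

lemma mmat_add_right {β : Type*} (v f g : β → ℂ) :
    mmat v (fun p => f p + g p) = mmat v f + mmat v g := by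
  funext x y
  simp only [mmat, outer, Matrix.sub_apply, Matrix.add_apply, map_add]
  ring

lemma inn_conjT {β : Type*} [Fintype β] (M : Matrix β β ℂ) (a b : β → ℂ) :
    inn a (Mᴴ.mulVec b) = inn (M.mulVec a) b := by
  unfold inn
  simp only [Matrix.mulVec, dotProduct, Matrix.conjTranspose_apply, map_sum,
    _root_.map_mul, Finset.mul_sum, Finset.sum_mul]
  rw [Finset.sum_comm]
  refine Finset.sum_congr rfl fun p _ => Finset.sum_congr rfl fun q _ => ?_
  rw [← starRingEnd_apply]
  ring

end FilterAux

/-- the measurement-filter operator `M⁽ⁿ⁾_j(i₁,…,i_{j-1})` obtained from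
the length-`n` output does not depend on the output length: it equals the same operator
computed from the length-`j` output, `M⁽ʲ⁾_j(i₁,…,i_{j-1})`.
(0-indexed: the target unit is the `m`-th one, `j = m+1`.) -/
theorem filter_independent_of_output_length
    (D k n m : ℕ) (hm : m < n) (θ0 : ℝ)
    (W : ℝ → Matrix (Fin D × Fin k) (Fin D × Fin k) ℂ)
    (hWu : ∀ θ, W θ ∈ Matrix.unitaryGroup (Fin D × Fin k) ℂ)
    (Wd : Matrix (Fin D × Fin k) (Fin D × Fin k) ℂ)
    (hWd : ∀ x y, HasDerivAt (fun θ => W θ x y) (Wd x y) θ0)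
    (ψ : Fin D → ℂ) (χ : Fin k → ℂ) (hψ : nsq ψ = 1) (hχ : nsq χ = 1)
    (hstat : (W θ0).mulVec (vtens ψ χ) = vtens ψ χ)
    (hphase : inn (vtens ψ χ) (((W θ0)ᴴ * Wd).mulVec (vtens ψ χ)) = 0)
    -- the joint states of all lengths and their derivatives at θ0
    (Ψ : (N : ℕ) → ℝ → (Fin D × (Fin N → Fin k)) → ℂ)
    (hΨ : ∀ N θ, Ψ N θ = (steps N (W θ)).mulVec (vtens ψ (vpow N χ)))
    (Ψd : (N : ℕ) → (Fin D × (Fin N → Fin k)) → ℂ)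
    (hΨd : ∀ N x, HasDerivAt (fun θ => Ψ N θ x) (Ψd N x) θ0)
    -- the measurement bases used on the first m units (for the fixed outcome record)
    (E : ℕ → Fin k → Fin k → ℂ)
    (honb : ∀ l, l < m → ∀ i i', inn (E l i) (E l i') = if i = i' then 1 else 0)
    (hunif : ∀ l, l < m → ∀ i, Complex.normSq (inn (E l i) χ) = 1 / k)
    -- the outcome record
    (ii : ℕ → Fin k) :
    ctrNoise n m hm (mmat (Ψ n θ0) (Ψd n)) (fun l => E l (ii l))
      = ctrNoise (m + 1) m (Nat.lt_succ_self m)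
          (mmat (Ψ (m + 1) θ0) (Ψd (m + 1))) (fun l => E l (ii l)) := by
  have hΨ0 : ∀ M, Ψ M θ0 = vtens ψ (vpow M χ) := fun M => by
    rw [hΨ M θ0, FilterAux.steps_fix _ _ _ hstat]
  have hphi : inn (vtens ψ χ) (Wd.mulVec (vtens ψ χ)) = 0 := by
    have h1 := hphase
    rw [← Matrix.mulVec_mulVec, FilterAux.inn_conjT, hstat] at h1
    exact h1
  have hzA : ∑ q : Fin D × Fin k,
      (vtens ψ χ) q * conj ((Wd.mulVec (vtens ψ χ)) q) = 0 := by
    have h2 : ∀ q : Fin D × Fin k, (vtens ψ χ) q * conj ((Wd.mulVec (vtens ψ χ)) q)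
        = conj (conj ((vtens ψ χ) q) * (Wd.mulVec (vtens ψ χ)) q) := by
      intro q
      rw [RingHom.map_mul (starRingEnd ℂ), Complex.conj_conj]
    rw [Finset.sum_congr rfl fun q _ => h2 q, ← map_sum]
    have : (∑ q : Fin D × Fin k, conj ((vtens ψ χ) q) * (Wd.mulVec (vtens ψ χ)) q) = 0 := hphi
    rw [this, map_zero]
  have hzB : ∑ q : Fin D × Fin k,
      (Wd.mulVec (vtens ψ χ)) q * conj ((vtens ψ χ) q) = 0 := by
    rw [Finset.sum_congr rfl fun q (_ : q ∈ Finset.univ) =>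
      mul_comm ((Wd.mulVec (vtens ψ χ)) q) (conj ((vtens ψ χ) q))]
    exact hphi
  have hchi1 : ∑ j : Fin k, χ j * conj (χ j) = 1 := by
    rw [Finset.sum_congr rfl fun j (_ : j ∈ Finset.univ) => Complex.mul_conj (χ j)]
    rw [← Complex.ofReal_sum]
    have : (∑ j : Fin k, Complex.normSq (χ j)) = nsq χ := rfl
    rw [this, hχ, Complex.ofReal_one]
  have hUnit : ∀ q q' : Fin D × Fin k,
      (∑ p : Fin D × Fin k, conj (W θ0 p q') * W θ0 p q) = if q' = q then 1 else 0 := by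
    have hu0 : star (W θ0) * W θ0 = 1 := Matrix.mem_unitaryGroup_iff'.mp (hWu θ0)
    intro q q'
    calc ∑ p : Fin D × Fin k, conj (W θ0 p q') * W θ0 p q
        = (star (W θ0) * W θ0) q' q := by
          rw [Matrix.mul_apply]
          refine Finset.sum_congr rfl fun p _ => ?_
          rw [Matrix.star_apply, starRingEnd_apply]
      _ = (1 : Matrix (Fin D × Fin k) (Fin D × Fin k) ℂ) q' q := by rw [hu0]
      _ = if q' = q then 1 else 0 := Matrix.one_apply
  revert hm
  induction n with
  | zero => intro hm; exact absurd hm (Nat.not_lt_zero m)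
  | succ N ih =>
    intro hm
    by_cases hmN : m < N
    · have hdec := FilterAux.psid_succ_eq θ0 W Wd hWd ψ χ hstat Ψ hΨ Ψd hΨd N
      have key : ctrNoise (N+1) m hm (mmat (Ψ (N+1) θ0) (Ψd (N+1))) (fun l => E l (ii l))
          = ctrNoise N m hmN (mmat (Ψ N θ0) (Ψd N)) (fun l => E l (ii l)) := by
        rw [hΨ0 (N+1), hΨ0 N, hdec, FilterAux.mmat_add_right, FilterAux.ctrNoise_add]
        have hz1 : ctrNoise (N+1) m hm (mmat (vtens ψ (vpow (N+1) χ))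
            (FilterAux.liftLast N (Wd.mulVec (vtens ψ χ)) (vpow N χ)))
            (fun l => E l (ii l)) = 0 := by
          rw [FilterAux.u_liftLast N ψ χ]
          unfold mmat
          rw [FilterAux.ctrNoise_sub,
            FilterAux.ctr_liftLast_zero N m hmN hm (vtens ψ χ) (Wd.mulVec (vtens ψ χ))
              (vpow N χ) (vpow N χ) (fun l => E l (ii l)) hzA,
            FilterAux.ctr_liftLast_zero N m hmN hm (Wd.mulVec (vtens ψ χ)) (vtens ψ χ)
              (vpow N χ) (vpow N χ) (fun l => E l (ii l)) hzB,
            sub_zero]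
        have hz2 : ctrNoise (N+1) m hm (mmat (vtens ψ (vpow (N+1) χ))
            (FilterAux.Uapp N (W θ0) χ (Ψd N))) (fun l => E l (ii l))
            = ctrNoise N m hmN (mmat (vtens ψ (vpow N χ)) (Ψd N)) (fun l => E l (ii l)) := by
          rw [FilterAux.u_Uapp N (W θ0) ψ χ hstat]
          unfold mmat
          simp only [FilterAux.ctrNoise_sub]
          rw [FilterAux.ctr_Uapp N m hmN hm (W θ0) hUnit χ hchi1,
            FilterAux.ctr_Uapp N m hmN hm (W θ0) hUnit χ hchi1]
        rw [hz1, hz2, zero_add]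
      rw [key]
      exact ih hmN
    · have hNm : N = m := by omega
      subst hNm
      rfl
end
end
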